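/- Let Γ and Δ be multisets of D-formulas and G-formulas respectively, and let Γ → Δ have a C-proof Ξ in which an ∨-L rule with upper sequents B,Σ → Π and D,Σ → Π and lower sequent B∨D,Σ → Π occurs with the following characteristic: there is no F ∈ Π such that B∨D,Σ → F has an I-proof, but there is an F ∈ Π such that D,Σ → F has an I-proof. Then D,Σ → Δ has a C-proof whose nonconstructiveness measure is smaller than μ(Ξ). -/

import Mathlib

set_option maxHeartbeats 1000000

/-- Terms of a first-order language: variables (de Bruijn indices for
quantified variables) and constants. -/
inductive Tm : Type
  | var : ℕ → Tm
  | const : ℕ → Tm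

namespace Tm

/-- Substitution of the term `u` for the variable with index `k`. -/
def subst (k : ℕ) (u : Tm) : Tm → Tm
  | var n => if n = k then u else var n
  | const c => const c

/-- The constant `c` occurs in a term. -/
def constIn (c : ℕ) : Tm → Prop
  | var _ => False
  | const d => d = c

end Tm

/-- First-order formulas over the primitives ⊤, ⊥, ∧, ∨, ⊃, ∃, ∀.
Quantifiers are represented with de Bruijn indices. -/
inductive Fm : Type
  | top : Fm
  | bot : Fm
  | atom : ℕ → List Tm → Fm
  | conj : Fm → Fm → Fm
  | disj : Fm → Fm → Fm
  | imp : Fm → Fm → Fm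
  | ex : Fm → Fm
  | all : Fm → Fm

namespace Fm

/-- Substitution of a term for the variable with de Bruijn index `k`. -/
def subst (k : ℕ) (u : Tm) : Fm → Fm
  | top => top
  | bot => bot
  | atom p ts => atom p (ts.map (Tm.subst k u))
  | conj a b => conj (subst k u a) (subst k u b)
  | disj a b => disj (subst k u a) (subst k u b)
  | imp a b => imp (subst k u a) (subst k u b)
  | ex a => ex (subst (k + 1) u a)
  | all a => all (subst (k + 1) u a)

/-- `[t/x]B`: instantiation of the outermost bound variable of the body of a
quantified formula with the term `u`. -/
def inst (u : Tm) (a : Fm) : Fm := subst 0 u a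

/-- Atomic formulas (⊤ and ⊥ are *not* atomic). -/
def isAtom : Fm → Prop
  | atom _ _ => True
  | _ => False

/-- Formulas that need no right-introduction rule in a uniform/O_G proof:
atomic formulas and ⊥. -/
def neutral (F : Fm) : Prop := F.isAtom ∨ F = bot

/-- The constant `c` occurs in a formula. -/
def constIn (c : ℕ) : Fm → Prop
  | top => False
  | bot => False
  | atom _ ts => ∃ t ∈ ts, t.constIn c
  | conj a b => constIn c a ∨ constIn c b
  | disj a b => constIn c a ∨ constIn c b
  | imp a b => constIn c a ∨ constIn c b
  | ex a => constIn c a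
  | all a => constIn c a

end Fm

/-- The eigenvariable (constant) `c` does not occur in the sequent `Γ → Δ`. -/
def FreshSeq (c : ℕ) (Γ Δ : Multiset Fm) : Prop :=
  (∀ F ∈ Γ, ¬ F.constIn c) ∧ ∀ F ∈ Δ, ¬ F.constIn c

/-- The sequent `Γ → Δ` is an axiom: ⊤ ∈ Δ, or some `A` that is ⊥ or atomic
belongs to both `Γ` and `Δ`. -/
def AxSeq (Γ Δ : Multiset Fm) : Prop :=
  Fm.top ∈ Δ ∨ ∃ A : Fm, (A = Fm.bot ∨ A.isAtom) ∧ A ∈ Γ ∧ A ∈ Δ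

/-- C-proofs: arbitrary derivations in the sequent calculus of the paper.
Sequents are pairs of multisets of formulas. -/
inductive CProof : Multiset Fm → Multiset Fm → Type
  | ax {Γ Δ : Multiset Fm} (h : AxSeq Γ Δ) : CProof Γ Δ
  | contrL {B : Fm} {Γ Δ : Multiset Fm} (p : CProof (B ::ₘ B ::ₘ Γ) Δ) : CProof (B ::ₘ Γ) Δ
  | contrR {B : Fm} {Γ Δ : Multiset Fm} (p : CProof Γ (B ::ₘ B ::ₘ Δ)) : CProof Γ (B ::ₘ Δ)
  | botR {D : Fm} {Γ Δ : Multiset Fm} (p : CProof Γ (Fm.bot ::ₘ Δ)) : CProof Γ (D ::ₘ Δ)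
  | andL {B D : Fm} {Γ Δ : Multiset Fm} (p : CProof (B ::ₘ D ::ₘ (B.conj D) ::ₘ Γ) Δ) :
      CProof ((B.conj D) ::ₘ Γ) Δ
  | andR {B D : Fm} {Γ Δ : Multiset Fm} (p : CProof Γ (B ::ₘ Δ)) (q : CProof Γ (D ::ₘ Δ)) :
      CProof Γ ((B.conj D) ::ₘ Δ)
  | orL {B D : Fm} {Γ Δ : Multiset Fm} (p : CProof (B ::ₘ Γ) Δ) (q : CProof (D ::ₘ Γ) Δ) :
      CProof ((B.disj D) ::ₘ Γ) Δ
  | orR1 {B D : Fm} {Γ Δ : Multiset Fm} (p : CProof Γ (B ::ₘ Δ)) : CProof Γ ((B.disj D) ::ₘ Δ)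
  | orR2 {B D : Fm} {Γ Δ : Multiset Fm} (p : CProof Γ (D ::ₘ Δ)) : CProof Γ ((B.disj D) ::ₘ Δ)
  | impL {B D : Fm} {Γ Δ Θ : Multiset Fm} (p : CProof ((B.imp D) ::ₘ Γ) (B ::ₘ Δ))
      (q : CProof (D ::ₘ Γ) Θ) : CProof ((B.imp D) ::ₘ Γ) (Δ + Θ)
  | impR {B D : Fm} {Γ Δ : Multiset Fm} (p : CProof (B ::ₘ Γ) (D ::ₘ Δ)) :
      CProof Γ ((B.imp D) ::ₘ Δ)
  | allL {B : Fm} {Γ Δ : Multiset Fm} (t : Tm)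
      (p : CProof ((B.inst t) ::ₘ (Fm.all B) ::ₘ Γ) Δ) : CProof ((Fm.all B) ::ₘ Γ) Δ
  | exR {B : Fm} {Γ Δ : Multiset Fm} (t : Tm) (p : CProof Γ ((B.inst t) ::ₘ Δ)) :
      CProof Γ ((Fm.ex B) ::ₘ Δ)
  | exL {B : Fm} {Γ Δ : Multiset Fm} (c : ℕ) (hc : FreshSeq c ((Fm.ex B) ::ₘ Γ) Δ)
      (p : CProof ((B.inst (Tm.const c)) ::ₘ Γ) Δ) : CProof ((Fm.ex B) ::ₘ Γ) Δ
  | allR {B : Fm} {Γ Δ : Multiset Fm} (c : ℕ) (hc : FreshSeq c Γ ((Fm.all B) ::ₘ Δ))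
      (p : CProof Γ ((B.inst (Tm.const c)) ::ₘ Δ)) : CProof Γ ((Fm.all B) ::ₘ Δ)

namespace CProof

/-- An I-proof is a C-proof in which every sequent has exactly one formula in
its succedent. -/
def isI : ∀ (Γ Δ : Multiset Fm), CProof Γ Δ → Prop
  | _, _, @ax _ Δ _ => Multiset.card Δ = 1
  | _, _, @contrL _ _ Δ p => Multiset.card Δ = 1 ∧ isI _ _ p
  | _, _, @contrR B _ Δ p => Multiset.card (B ::ₘ Δ) = 1 ∧ isI _ _ p
  | _, _, @botR D _ Δ p => Multiset.card (D ::ₘ Δ) = 1 ∧ isI _ _ p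
  | _, _, @andL _ _ _ Δ p => Multiset.card Δ = 1 ∧ isI _ _ p
  | _, _, @andR B D _ Δ p q => Multiset.card ((B.conj D) ::ₘ Δ) = 1 ∧ isI _ _ p ∧ isI _ _ q
  | _, _, @orL _ _ _ Δ p q => Multiset.card Δ = 1 ∧ isI _ _ p ∧ isI _ _ q
  | _, _, @orR1 B D _ Δ p => Multiset.card ((B.disj D) ::ₘ Δ) = 1 ∧ isI _ _ p
  | _, _, @orR2 B D _ Δ p => Multiset.card ((B.disj D) ::ₘ Δ) = 1 ∧ isI _ _ p
  | _, _, @impL _ _ _ Δ Θ p q => Multiset.card (Δ + Θ) = 1 ∧ isI _ _ p ∧ isI _ _ q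
  | _, _, @impR B D _ Δ p => Multiset.card ((B.imp D) ::ₘ Δ) = 1 ∧ isI _ _ p
  | _, _, @allL _ _ Δ _ p => Multiset.card Δ = 1 ∧ isI _ _ p
  | _, _, @exR B _ Δ _ p => Multiset.card ((Fm.ex B) ::ₘ Δ) = 1 ∧ isI _ _ p
  | _, _, @exL _ _ Δ _ _ p => Multiset.card Δ = 1 ∧ isI _ _ p
  | _, _, @allR B _ Δ _ _ p => Multiset.card ((Fm.all B) ::ₘ Δ) = 1 ∧ isI _ _ p

end CProof

/-- Classical provability: `Γ ⊢_C F`. -/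
def CProv (Γ : Multiset Fm) (F : Fm) : Prop := Nonempty (CProof Γ ({F} : Multiset Fm))

/-- Intuitionistic provability: `Γ ⊢_I F`. -/
def IProv (Γ : Multiset Fm) (F : Fm) : Prop := ∃ p : CProof Γ ({F} : Multiset Fm), p.isI

namespace CProof

open Classical in
/-- The nonconstructiveness measure of a C-proof: the number of
nonconstructive occurrences of ∨-L and ⊃-R rules in it. -/
noncomputable def mu : ∀ (Γ Δ : Multiset Fm), CProof Γ Δ → ℕ
  | _, _, ax _ => 0
  | _, _, contrL p => mu _ _ p
  | _, _, contrR p => mu _ _ p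
  | _, _, botR p => mu _ _ p
  | _, _, andL p => mu _ _ p
  | _, _, andR p q => mu _ _ p + mu _ _ q
  | _, _, @orL B D Γ Δ p q =>
      mu _ _ p + mu _ _ q +
        (if ∃ F ∈ Δ, IProv (B ::ₘ Γ) F ∧ IProv (D ::ₘ Γ) F then 0 else 1)
  | _, _, orR1 p => mu _ _ p
  | _, _, orR2 p => mu _ _ p
  | _, _, impL p q => mu _ _ p + mu _ _ q
  | _, _, @impR B D Γ _ p => mu _ _ p + (if IProv (B ::ₘ Γ) D then 0 else 1)
  | _, _, allL _ p => mu _ _ p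
  | _, _, exR _ p => mu _ _ p
  | _, _, exL _ _ p => mu _ _ p
  | _, _, allR _ _ p => mu _ _ p

/-- The sequent `S → P` appears in the given C-proof. -/
def occursSeq : ∀ (Γ Δ : Multiset Fm), CProof Γ Δ → Multiset Fm → Multiset Fm → Prop
  | _, _, @ax Γ Δ _, S, P => Γ = S ∧ Δ = P
  | _, _, @contrL B Γ Δ p, S, P => ((B ::ₘ Γ) = S ∧ Δ = P) ∨ occursSeq _ _ p S P
  | _, _, @contrR B Γ Δ p, S, P => (Γ = S ∧ (B ::ₘ Δ) = P) ∨ occursSeq _ _ p S P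
  | _, _, @botR D Γ Δ p, S, P => (Γ = S ∧ (D ::ₘ Δ) = P) ∨ occursSeq _ _ p S P
  | _, _, @andL B D Γ Δ p, S, P => (((B.conj D) ::ₘ Γ) = S ∧ Δ = P) ∨ occursSeq _ _ p S P
  | _, _, @andR B D Γ Δ p q, S, P =>
      (Γ = S ∧ ((B.conj D) ::ₘ Δ) = P) ∨ occursSeq _ _ p S P ∨ occursSeq _ _ q S P
  | _, _, @orL B D Γ Δ p q, S, P =>
      (((B.disj D) ::ₘ Γ) = S ∧ Δ = P) ∨ occursSeq _ _ p S P ∨ occursSeq _ _ q S P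
  | _, _, @orR1 B D Γ Δ p, S, P => (Γ = S ∧ ((B.disj D) ::ₘ Δ) = P) ∨ occursSeq _ _ p S P
  | _, _, @orR2 B D Γ Δ p, S, P => (Γ = S ∧ ((B.disj D) ::ₘ Δ) = P) ∨ occursSeq _ _ p S P
  | _, _, @impL B D Γ Δ Θ p q, S, P =>
      (((B.imp D) ::ₘ Γ) = S ∧ (Δ + Θ) = P) ∨ occursSeq _ _ p S P ∨ occursSeq _ _ q S P
  | _, _, @impR B D Γ Δ p, S, P => (Γ = S ∧ ((B.imp D) ::ₘ Δ) = P) ∨ occursSeq _ _ p S P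
  | _, _, @allL B Γ Δ _ p, S, P => (((Fm.all B) ::ₘ Γ) = S ∧ Δ = P) ∨ occursSeq _ _ p S P
  | _, _, @exR B Γ Δ _ p, S, P => (Γ = S ∧ ((Fm.ex B) ::ₘ Δ) = P) ∨ occursSeq _ _ p S P
  | _, _, @exL B Γ Δ _ _ p, S, P => (((Fm.ex B) ::ₘ Γ) = S ∧ Δ = P) ∨ occursSeq _ _ p S P
  | _, _, @allR B Γ Δ _ _ p, S, P => (Γ = S ∧ ((Fm.all B) ::ₘ Δ) = P) ∨ occursSeq _ _ p S P

/-- `hasImpR p B S P D` holds when an ⊃-R rule with upper sequent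
`B,S → P,D` and lower sequent `S → P,B⊃D` occurs in the proof `p`. -/
def hasImpR : ∀ (Γ Δ : Multiset Fm), CProof Γ Δ → Fm → Multiset Fm → Multiset Fm → Fm → Prop
  | _, _, ax _, _, _, _, _ => False
  | _, _, contrL p, B, S, P, D => hasImpR _ _ p B S P D
  | _, _, contrR p, B, S, P, D => hasImpR _ _ p B S P D
  | _, _, botR p, B, S, P, D => hasImpR _ _ p B S P D
  | _, _, andL p, B, S, P, D => hasImpR _ _ p B S P D
  | _, _, andR p q, B, S, P, D => hasImpR _ _ p B S P D ∨ hasImpR _ _ q B S P D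
  | _, _, orL p q, B, S, P, D => hasImpR _ _ p B S P D ∨ hasImpR _ _ q B S P D
  | _, _, orR1 p, B, S, P, D => hasImpR _ _ p B S P D
  | _, _, orR2 p, B, S, P, D => hasImpR _ _ p B S P D
  | _, _, impL p q, B, S, P, D => hasImpR _ _ p B S P D ∨ hasImpR _ _ q B S P D
  | _, _, @impR B' D' Γ' Δ' p, B, S, P, D =>
      (B' = B ∧ Γ' = S ∧ Δ' = P ∧ D' = D) ∨ hasImpR _ _ p B S P D
  | _, _, allL _ p, B, S, P, D => hasImpR _ _ p B S P D
  | _, _, exR _ p, B, S, P, D => hasImpR _ _ p B S P D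
  | _, _, exL _ _ p, B, S, P, D => hasImpR _ _ p B S P D
  | _, _, allR _ _ p, B, S, P, D => hasImpR _ _ p B S P D

/-- `hasOrL p B D S P` holds when an ∨-L rule with upper sequents
`B,S → P` and `D,S → P` and lower sequent `B∨D,S → P` occurs in `p`. -/
def hasOrL : ∀ (Γ Δ : Multiset Fm), CProof Γ Δ → Fm → Fm → Multiset Fm → Multiset Fm → Prop
  | _, _, ax _, _, _, _, _ => False
  | _, _, contrL p, B, D, S, P => hasOrL _ _ p B D S P
  | _, _, contrR p, B, D, S, P => hasOrL _ _ p B D S P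
  | _, _, botR p, B, D, S, P => hasOrL _ _ p B D S P
  | _, _, andL p, B, D, S, P => hasOrL _ _ p B D S P
  | _, _, andR p q, B, D, S, P => hasOrL _ _ p B D S P ∨ hasOrL _ _ q B D S P
  | _, _, @orL B' D' Γ' Δ' p q, B, D, S, P =>
      (B' = B ∧ D' = D ∧ Γ' = S ∧ Δ' = P) ∨ hasOrL _ _ p B D S P ∨ hasOrL _ _ q B D S P
  | _, _, orR1 p, B, D, S, P => hasOrL _ _ p B D S P
  | _, _, orR2 p, B, D, S, P => hasOrL _ _ p B D S P
  | _, _, impL p q, B, D, S, P => hasOrL _ _ p B D S P ∨ hasOrL _ _ q B D S P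
  | _, _, impR p, B, D, S, P => hasOrL _ _ p B D S P
  | _, _, allL _ p, B, D, S, P => hasOrL _ _ p B D S P
  | _, _, exR _ p, B, D, S, P => hasOrL _ _ p B D S P
  | _, _, exL _ _ p, B, D, S, P => hasOrL _ _ p B D S P
  | _, _, allR _ _ p, B, D, S, P => hasOrL _ _ p B D S P

/-- Every formula in `Δ` is atomic or ⊥. -/
def neutralM (Δ : Multiset Fm) : Prop := ∀ F ∈ Δ, F.neutral

/-- A uniform proof: an I-proof in which any sequent whose succedent contains
a non-atomic formula occurs only as the lower sequent of an inference rule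
that introduces the top-level logical symbol of that formula. -/
def isUniform : ∀ (Γ Δ : Multiset Fm), CProof Γ Δ → Prop
  | _, _, @ax _ Δ _ => Multiset.card Δ = 1
  | _, _, @contrL _ _ Δ p => Multiset.card Δ = 1 ∧ neutralM Δ ∧ isUniform _ _ p
  | _, _, @contrR B _ Δ p =>
      Multiset.card (B ::ₘ Δ) = 1 ∧ neutralM (B ::ₘ Δ) ∧ isUniform _ _ p
  | _, _, @botR D _ Δ p =>
      Multiset.card (D ::ₘ Δ) = 1 ∧ neutralM (D ::ₘ Δ) ∧ isUniform _ _ p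
  | _, _, @andL _ _ _ Δ p => Multiset.card Δ = 1 ∧ neutralM Δ ∧ isUniform _ _ p
  | _, _, @andR B D _ Δ p q =>
      Multiset.card ((B.conj D) ::ₘ Δ) = 1 ∧ isUniform _ _ p ∧ isUniform _ _ q
  | _, _, @orL _ _ _ Δ p q =>
      Multiset.card Δ = 1 ∧ neutralM Δ ∧ isUniform _ _ p ∧ isUniform _ _ q
  | _, _, @orR1 B D _ Δ p => Multiset.card ((B.disj D) ::ₘ Δ) = 1 ∧ isUniform _ _ p
  | _, _, @orR2 B D _ Δ p => Multiset.card ((B.disj D) ::ₘ Δ) = 1 ∧ isUniform _ _ p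
  | _, _, @impL _ _ _ Δ Θ p q =>
      Multiset.card (Δ + Θ) = 1 ∧ neutralM (Δ + Θ) ∧ isUniform _ _ p ∧ isUniform _ _ q
  | _, _, @impR B D _ Δ p => Multiset.card ((B.imp D) ::ₘ Δ) = 1 ∧ isUniform _ _ p
  | _, _, @allL _ _ Δ _ p => Multiset.card Δ = 1 ∧ neutralM Δ ∧ isUniform _ _ p
  | _, _, @exR B _ Δ _ p => Multiset.card ((Fm.ex B) ::ₘ Δ) = 1 ∧ isUniform _ _ p
  | _, _, @exL _ _ Δ _ _ p => Multiset.card Δ = 1 ∧ neutralM Δ ∧ isUniform _ _ p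
  | _, _, @allR B _ Δ _ _ p => Multiset.card ((Fm.all B) ::ₘ Δ) = 1 ∧ isUniform _ _ p

end CProof

/-- Uniform provability: `Γ ⊢_O F`. -/
def UProv (Γ : Multiset Fm) (F : Fm) : Prop :=
  ∃ p : CProof Γ ({F} : Multiset Fm), p.isUniform

/-- The ordering ⪰ measuring the strength of formulas as assumptions. -/
inductive Fm.ge : Fm → Fm → Prop
  | refl (F : Fm) : Fm.ge F F
  | imp {F A B : Fm} : Fm.ge F B → Fm.ge F (Fm.imp A B)
  | disjl {F A B : Fm} : Fm.ge F A → Fm.ge F (Fm.disj A B)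
  | disjr {F A B : Fm} : Fm.ge F B → Fm.ge F (Fm.disj A B)
  | ex {F P : Fm} (c : ℕ) : Fm.ge F (P.inst (Tm.const c)) → Fm.ge F (Fm.ex P)

/-- `MsGe Γ₁ Γ₂`: there is an injective map κ from `Γ₂` into `Γ₁` with
`κ(F) ⪰ F` for every `F ∈ Γ₂`. -/
def MsGe (Γ₁ Γ₂ : Multiset Fm) : Prop :=
  ∃ Γ' ≤ Γ₁, Multiset.Rel Fm.ge Γ' Γ₂

mutual
  /-- G-formulas: G ::= ⊤ | ⊥ | A | G∧G | G∨G | D⊃G | ∃x G. -/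
  inductive GFm : Fm → Prop
    | top : GFm Fm.top
    | bot : GFm Fm.bot
    | atom {p : ℕ} {ts : List Tm} : GFm (Fm.atom p ts)
    | conj {a b : Fm} : GFm a → GFm b → GFm (Fm.conj a b)
    | disj {a b : Fm} : GFm a → GFm b → GFm (Fm.disj a b)
    | imp {a b : Fm} : DFm a → GFm b → GFm (Fm.imp a b)
    | ex {a : Fm} : GFm a → GFm (Fm.ex a)

  /-- D-formulas: D ::= ⊤ | ⊥ | A | G⊃D | D∧D | D∨D | ∃x D | ∀x D. -/
  inductive DFm : Fm → Prop
    | top : DFm Fm.top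
    | bot : DFm Fm.bot
    | atom {p : ℕ} {ts : List Tm} : DFm (Fm.atom p ts)
    | imp {a b : Fm} : GFm a → DFm b → DFm (Fm.imp a b)
    | conj {a b : Fm} : DFm a → DFm b → DFm (Fm.conj a b)
    | disj {a b : Fm} : DFm a → DFm b → DFm (Fm.disj a b)
    | ex {a : Fm} : DFm a → DFm (Fm.ex a)
    | all {a : Fm} : DFm a → DFm (Fm.all a)
end
/-- I_G-proofs: derivations in the intuitionistic sequent calculus (single
succedent formula) augmented with the derived rules ∨-L_G and res_G, in which
the eigenvariable proviso on ∃-L and ∀-R also disallows constants in `G`. -/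
inductive IGProof (G : Fm) : Multiset Fm → Fm → Type
  | ax {Γ : Multiset Fm} {F : Fm} (h : AxSeq Γ ({F} : Multiset Fm)) : IGProof G Γ F
  | contrL {B : Fm} {Γ : Multiset Fm} {F : Fm} (p : IGProof G (B ::ₘ B ::ₘ Γ) F) :
      IGProof G (B ::ₘ Γ) F
  | botR {Γ : Multiset Fm} {F : Fm} (p : IGProof G Γ Fm.bot) : IGProof G Γ F
  | andL {B D : Fm} {Γ : Multiset Fm} {F : Fm}
      (p : IGProof G (B ::ₘ D ::ₘ (B.conj D) ::ₘ Γ) F) : IGProof G ((B.conj D) ::ₘ Γ) F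
  | andR {B D : Fm} {Γ : Multiset Fm} (p : IGProof G Γ B) (q : IGProof G Γ D) :
      IGProof G Γ (B.conj D)
  | orL {B D : Fm} {Γ : Multiset Fm} {F : Fm} (p : IGProof G (B ::ₘ Γ) F)
      (q : IGProof G (D ::ₘ Γ) F) : IGProof G ((B.disj D) ::ₘ Γ) F
  | orR1 {B D : Fm} {Γ : Multiset Fm} (p : IGProof G Γ B) : IGProof G Γ (B.disj D)
  | orR2 {B D : Fm} {Γ : Multiset Fm} (p : IGProof G Γ D) : IGProof G Γ (B.disj D)
  | impL {B D : Fm} {Γ : Multiset Fm} {F : Fm} (p : IGProof G ((B.imp D) ::ₘ Γ) B)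
      (q : IGProof G (D ::ₘ Γ) F) : IGProof G ((B.imp D) ::ₘ Γ) F
  | impR {B D : Fm} {Γ : Multiset Fm} (p : IGProof G (B ::ₘ Γ) D) : IGProof G Γ (B.imp D)
  | allL {B : Fm} {Γ : Multiset Fm} {F : Fm} (t : Tm)
      (p : IGProof G ((B.inst t) ::ₘ (Fm.all B) ::ₘ Γ) F) : IGProof G ((Fm.all B) ::ₘ Γ) F
  | exR {B : Fm} {Γ : Multiset Fm} (t : Tm) (p : IGProof G Γ (B.inst t)) :
      IGProof G Γ (Fm.ex B)
  | exL {B : Fm} {Γ : Multiset Fm} {F : Fm} (c : ℕ)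
      (hc : FreshSeq c ((Fm.ex B) ::ₘ Γ) ({F} : Multiset Fm)) (hG : ¬ G.constIn c)
      (p : IGProof G ((B.inst (Tm.const c)) ::ₘ Γ) F) : IGProof G ((Fm.ex B) ::ₘ Γ) F
  | allR {B : Fm} {Γ : Multiset Fm} (c : ℕ)
      (hc : FreshSeq c Γ ({Fm.all B} : Multiset Fm)) (hG : ¬ G.constIn c)
      (p : IGProof G Γ (B.inst (Tm.const c))) : IGProof G Γ (Fm.all B)
  | orLG {B D : Fm} {Γ : Multiset Fm} {F : Fm} (p : IGProof G (B ::ₘ Γ) F)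
      (q : IGProof G (D ::ₘ Γ) G) : IGProof G ((B.disj D) ::ₘ Γ) F
  | resG {Γ : Multiset Fm} {F : Fm} (p : IGProof G Γ G) : IGProof G Γ F

namespace IGProof

/-- The number of occurrences of the ∨-L rule in an I_G-proof. -/
def orLCount : ∀ (G : Fm) (Γ : Multiset Fm) (F : Fm), IGProof G Γ F → ℕ
  | _, _, _, ax _ => 0
  | _, _, _, contrL p => orLCount _ _ _ p
  | _, _, _, botR p => orLCount _ _ _ p
  | _, _, _, andL p => orLCount _ _ _ p
  | _, _, _, andR p q => orLCount _ _ _ p + orLCount _ _ _ q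
  | _, _, _, orL p q => orLCount _ _ _ p + orLCount _ _ _ q + 1
  | _, _, _, orR1 p => orLCount _ _ _ p
  | _, _, _, orR2 p => orLCount _ _ _ p
  | _, _, _, impL p q => orLCount _ _ _ p + orLCount _ _ _ q
  | _, _, _, impR p => orLCount _ _ _ p
  | _, _, _, allL _ p => orLCount _ _ _ p
  | _, _, _, exR _ p => orLCount _ _ _ p
  | _, _, _, exL _ _ _ p => orLCount _ _ _ p
  | _, _, _, allR _ _ _ p => orLCount _ _ _ p
  | _, _, _, orLG p q => orLCount _ _ _ p + orLCount _ _ _ q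
  | _, _, _, resG p => orLCount _ _ _ p

/-- The height of an I_G-proof: the length of its longest branch. -/
def height : ∀ (G : Fm) (Γ : Multiset Fm) (F : Fm), IGProof G Γ F → ℕ
  | _, _, _, ax _ => 1
  | _, _, _, contrL p => height _ _ _ p + 1
  | _, _, _, botR p => height _ _ _ p + 1
  | _, _, _, andL p => height _ _ _ p + 1
  | _, _, _, andR p q => max (height _ _ _ p) (height _ _ _ q) + 1
  | _, _, _, orL p q => max (height _ _ _ p) (height _ _ _ q) + 1
  | _, _, _, orR1 p => height _ _ _ p + 1
  | _, _, _, orR2 p => height _ _ _ p + 1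
  | _, _, _, impL p q => max (height _ _ _ p) (height _ _ _ q) + 1
  | _, _, _, impR p => height _ _ _ p + 1
  | _, _, _, allL _ p => height _ _ _ p + 1
  | _, _, _, exR _ p => height _ _ _ p + 1
  | _, _, _, exL _ _ _ p => height _ _ _ p + 1
  | _, _, _, allR _ _ _ p => height _ _ _ p + 1
  | _, _, _, orLG p q => max (height _ _ _ p) (height _ _ _ q) + 1
  | _, _, _, resG p => height _ _ _ p + 1

/-- The number of sequents appearing in an I_G-proof. -/
def size : ∀ (G : Fm) (Γ : Multiset Fm) (F : Fm), IGProof G Γ F → ℕ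
  | _, _, _, ax _ => 1
  | _, _, _, contrL p => size _ _ _ p + 1
  | _, _, _, botR p => size _ _ _ p + 1
  | _, _, _, andL p => size _ _ _ p + 1
  | _, _, _, andR p q => size _ _ _ p + size _ _ _ q + 1
  | _, _, _, orL p q => size _ _ _ p + size _ _ _ q + 1
  | _, _, _, orR1 p => size _ _ _ p + 1
  | _, _, _, orR2 p => size _ _ _ p + 1
  | _, _, _, impL p q => size _ _ _ p + size _ _ _ q + 1
  | _, _, _, impR p => size _ _ _ p + 1
  | _, _, _, allL _ p => size _ _ _ p + 1
  | _, _, _, exR _ p => size _ _ _ p + 1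
  | _, _, _, exL _ _ _ p => size _ _ _ p + 1
  | _, _, _, allR _ _ _ p => size _ _ _ p + 1
  | _, _, _, orLG p q => size _ _ _ p + size _ _ _ q + 1
  | _, _, _, resG p => size _ _ _ p + 1

/-- O_G-proofs: I_G-proofs containing no occurrence of the ∨-L rule, in which
any sequent whose succedent contains a non-atomic formula occurs only as the
lower sequent of a rule introducing the top-level symbol of that formula. -/
def isOG : ∀ (G : Fm) (Γ : Multiset Fm) (F : Fm), IGProof G Γ F → Prop
  | _, _, _, ax _ => True
  | _, _, _, @contrL _ _ _ F p => F.neutral ∧ isOG _ _ _ p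
  | _, _, _, @botR _ _ F p => F.neutral ∧ isOG _ _ _ p
  | _, _, _, @andL _ _ _ _ F p => F.neutral ∧ isOG _ _ _ p
  | _, _, _, andR p q => isOG _ _ _ p ∧ isOG _ _ _ q
  | _, _, _, orL _ _ => False
  | _, _, _, orR1 p => isOG _ _ _ p
  | _, _, _, orR2 p => isOG _ _ _ p
  | _, _, _, @impL _ _ _ _ F p q => F.neutral ∧ isOG _ _ _ p ∧ isOG _ _ _ q
  | _, _, _, impR p => isOG _ _ _ p
  | _, _, _, @allL _ _ _ F _ p => F.neutral ∧ isOG _ _ _ p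
  | _, _, _, exR _ p => isOG _ _ _ p
  | _, _, _, @exL _ _ _ F _ _ _ p => F.neutral ∧ isOG _ _ _ p
  | _, _, _, allR _ _ _ p => isOG _ _ _ p
  | _, _, _, @orLG _ _ _ _ F p q => F.neutral ∧ isOG _ _ _ p ∧ isOG _ _ _ q
  | _, _, _, @resG _ _ F p => F.neutral ∧ isOG _ _ _ p

/-- `hasOrL p B D S F` holds when an ∨-L rule with upper sequents `B,S → F`
and `D,S → F` and lower sequent `B∨D,S → F` occurs in the I_G-proof `p`. -/
def hasOrL : ∀ (G : Fm) (Γ : Multiset Fm) (W : Fm), IGProof G Γ W →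
    Fm → Fm → Multiset Fm → Fm → Prop
  | _, _, _, ax _, _, _, _, _ => False
  | _, _, _, contrL p, B, D, S, F => hasOrL _ _ _ p B D S F
  | _, _, _, botR p, B, D, S, F => hasOrL _ _ _ p B D S F
  | _, _, _, andL p, B, D, S, F => hasOrL _ _ _ p B D S F
  | _, _, _, andR p q, B, D, S, F => hasOrL _ _ _ p B D S F ∨ hasOrL _ _ _ q B D S F
  | _, _, _, @orL _ B' D' Γ' F' p q, B, D, S, F =>
      (B' = B ∧ D' = D ∧ Γ' = S ∧ F' = F) ∨ hasOrL _ _ _ p B D S F ∨ hasOrL _ _ _ q B D S F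
  | _, _, _, orR1 p, B, D, S, F => hasOrL _ _ _ p B D S F
  | _, _, _, orR2 p, B, D, S, F => hasOrL _ _ _ p B D S F
  | _, _, _, impL p q, B, D, S, F => hasOrL _ _ _ p B D S F ∨ hasOrL _ _ _ q B D S F
  | _, _, _, impR p, B, D, S, F => hasOrL _ _ _ p B D S F
  | _, _, _, allL _ p, B, D, S, F => hasOrL _ _ _ p B D S F
  | _, _, _, exR _ p, B, D, S, F => hasOrL _ _ _ p B D S F
  | _, _, _, exL _ _ _ p, B, D, S, F => hasOrL _ _ _ p B D S F
  | _, _, _, allR _ _ _ p, B, D, S, F => hasOrL _ _ _ p B D S F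
  | _, _, _, orLG p q, B, D, S, F => hasOrL _ _ _ p B D S F ∨ hasOrL _ _ _ q B D S F
  | _, _, _, resG p, B, D, S, F => hasOrL _ _ _ p B D S F

end IGProof

/-- In the simplified syntax, `A` ranges over atomic formulas together with
⊤ and ⊥. -/
def AtFm (F : Fm) : Prop := F.isAtom ∨ F = Fm.top ∨ F = Fm.bot

/-- `disjs A [B₁,…,Bₙ]` is the disjunction `A ∨ B₁ ∨ … ∨ Bₙ`. -/
def disjs (A : Fm) : List Fm → Fm
  | [] => A
  | B :: l => Fm.disj A (disjs B l)

mutual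
  /-- Goals in the simplified syntax: G ::= A | G∧G | G∨G | D⊃G | ∃x G. -/
  inductive Goal : Fm → Prop
    | atm {A : Fm} : AtFm A → Goal A
    | conj {a b : Fm} : Goal a → Goal b → Goal (Fm.conj a b)
    | disj {a b : Fm} : Goal a → Goal b → Goal (Fm.disj a b)
    | imp {a b : Fm} : PCl a → Goal b → Goal (Fm.imp a b)
    | ex {a : Fm} : Goal a → Goal (Fm.ex a)

  /-- Program clauses in the simplified syntax:
  D ::= (A∨…∨A) | G⊃(A∨…∨A) | ∀x D. -/
  inductive PCl : Fm → Prop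
    | head {A : Fm} {l : List Fm} : AtFm A → (∀ B ∈ l, AtFm B) → PCl (disjs A l)
    | impHead {g A : Fm} {l : List Fm} : Goal g → AtFm A → (∀ B ∈ l, AtFm B) →
        PCl (Fm.imp g (disjs A l))
    | all {d : Fm} : PCl d → PCl (Fm.all d)
end

/-- The instances `[D]` of a program clause `D`, as pairs whose first
component is `∅` (`none`) or `{G}` (`some G`) and whose second component is
the collection of head atoms. -/
inductive ClInst : Fm → Option Fm → Multiset Fm → Prop
  | head {A : Fm} {l : List Fm} : AtFm A → (∀ B ∈ l, AtFm B) →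
      ClInst (disjs A l) none (A ::ₘ (l : Multiset Fm))
  | impHead {g A : Fm} {l : List Fm} : Goal g → AtFm A → (∀ B ∈ l, AtFm B) →
      ClInst (Fm.imp g (disjs A l)) (some g) (A ::ₘ (l : Multiset Fm))
  | all {d : Fm} {o : Option Fm} {m : Multiset Fm} (t : Tm) :
      ClInst (d.inst t) o m → ClInst (Fm.all d) o m

/-- `[Γ]`: the instances of the clauses in `Γ`. -/
def GammaInst (Γ : Multiset Fm) (o : Option Fm) (m : Multiset Fm) : Prop :=
  ∃ D ∈ Γ, ClInst D o m

/-- The reduced proof system relative to the goal `G`: axioms `Δ → ⊤`, the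
rules RESTART, ATOMIC and BACKCHAIN relativized to `G`, and ∨-R, ∧-R, ⊃-R
and ∃-R. -/
inductive RP (G : Fm) : Multiset Fm → Fm → Prop
  | topAx {Γ : Multiset Fm} : RP G Γ Fm.top
  | restart {Γ : Multiset Fm} {C : Fm} (hC : C.isAtom ∨ C = Fm.bot) (p : RP G Γ G) :
      RP G Γ C
  | atomic {Γ : Multiset Fm} {C : Fm} {m : Multiset Fm} (hC : C.isAtom ∨ C = Fm.bot)
      (h : GammaInst Γ none (C ::ₘ m) ∨ GammaInst Γ none (Fm.bot ::ₘ m))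
      (ps : ∀ A ∈ m, RP G (A ::ₘ Γ) G) : RP G Γ C
  | backchain {Γ : Multiset Fm} {C G' : Fm} {m : Multiset Fm}
      (hC : C.isAtom ∨ C = Fm.bot)
      (h : GammaInst Γ (some G') (C ::ₘ m) ∨ GammaInst Γ (some G') (Fm.bot ::ₘ m))
      (p : RP G Γ G') (ps : ∀ A ∈ m, RP G (A ::ₘ Γ) G) : RP G Γ C
  | orR1 {Γ : Multiset Fm} {B D : Fm} (p : RP G Γ B) : RP G Γ (B.disj D)
  | orR2 {Γ : Multiset Fm} {B D : Fm} (p : RP G Γ D) : RP G Γ (B.disj D)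
  | andR {Γ : Multiset Fm} {B D : Fm} (p : RP G Γ B) (q : RP G Γ D) : RP G Γ (B.conj D)
  | impR {Γ : Multiset Fm} {B D : Fm} (p : RP G (B ::ₘ Γ) D) : RP G Γ (B.imp D)
  | exR {Γ : Multiset Fm} {B : Fm} (t : Tm) (p : RP G Γ (B.inst t)) : RP G Γ (Fm.ex B)

/-! ### Auxiliary development for Statement 6 -/

section Orl

open Multiset

deriving instance DecidableEq for Tm
deriving instance DecidableEq for Fm

/-- Transitivity of the strength ordering. -/
theorem Fm.ge_trans {X Y Z : Fm} (h1 : Fm.ge X Y) (h2 : Fm.ge Y Z) : Fm.ge X Z := by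
  induction h2 with
  | refl => exact h1
  | imp _ ih => exact Fm.ge.imp ih
  | disjl _ ih => exact Fm.ge.disjl ih
  | disjr _ ih => exact Fm.ge.disjr ih
  | ex c _ ih => exact Fm.ge.ex c ih

theorem Fm.ge_eq_of_atom {E A : Fm} (hA : A = Fm.bot ∨ A.isAtom) (h : Fm.ge E A) : E = A := by
  cases h with
  | refl => rfl
  | imp => rcases hA with hA | hA; · exact absurd hA (by simp)
           · exact absurd hA (by simp [Fm.isAtom])
  | disjl => rcases hA with hA | hA; · exact absurd hA (by simp)
             · exact absurd hA (by simp [Fm.isAtom])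
  | disjr => rcases hA with hA | hA; · exact absurd hA (by simp)
             · exact absurd hA (by simp [Fm.isAtom])
  | ex => rcases hA with hA | hA; · exact absurd hA (by simp)
          · exact absurd hA (by simp [Fm.isAtom])

theorem Fm.ge_conj_inv {E a b : Fm} (h : Fm.ge E (Fm.conj a b)) : E = Fm.conj a b := by
  cases h; rfl

theorem Fm.ge_all_inv {E a : Fm} (h : Fm.ge E (Fm.all a)) : E = Fm.all a := by
  cases h; rfl

theorem Fm.ge_disj_inv {E a b : Fm} (h : Fm.ge E (Fm.disj a b)) :
    E = Fm.disj a b ∨ Fm.ge E a ∨ Fm.ge E b := by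
  cases h with
  | refl => exact Or.inl rfl
  | disjl h => exact Or.inr (Or.inl h)
  | disjr h => exact Or.inr (Or.inr h)

theorem Fm.ge_imp_inv {E a b : Fm} (h : Fm.ge E (Fm.imp a b)) :
    E = Fm.imp a b ∨ Fm.ge E b := by
  cases h with
  | refl => exact Or.inl rfl
  | imp h => exact Or.inr h

theorem Fm.ge_ex_inv {E a : Fm} (h : Fm.ge E (Fm.ex a)) :
    E = Fm.ex a ∨ ∃ c, Fm.ge E (a.inst (Tm.const c)) := by
  cases h with
  | refl => exact Or.inl rfl
  | ex c h => exact Or.inr ⟨c, h⟩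

/-- `SGe Γ₁ Γ₂`: every formula of `Γ₂` is covered by a stronger formula of `Γ₁`. -/
def SGe (Γ₁ Γ₂ : Multiset Fm) : Prop := ∀ F ∈ Γ₂, ∃ E ∈ Γ₁, Fm.ge E F

theorem SGe.refl (Γ : Multiset Fm) : SGe Γ Γ := fun F hF => ⟨F, hF, Fm.ge.refl F⟩

theorem SGe.consL {A : Fm} {Γ₁ Γ₂ : Multiset Fm} (h : SGe Γ₁ Γ₂) : SGe (A ::ₘ Γ₁) Γ₂ :=
  fun F hF => (h F hF).imp fun E hE => ⟨Multiset.mem_cons_of_mem hE.1, hE.2⟩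

theorem SGe.consR {B : Fm} {Γ₁ Γ₂ : Multiset Fm} (h : SGe Γ₁ Γ₂)
    (hB : ∃ E ∈ Γ₁, Fm.ge E B) : SGe Γ₁ (B ::ₘ Γ₂) := by
  intro F hF
  rcases Multiset.mem_cons.1 hF with rfl | hF
  · exact hB
  · exact h F hF

theorem SGe.cons {E B : Fm} {Γ₁ Γ₂ : Multiset Fm} (hE : Fm.ge E B) (h : SGe Γ₁ Γ₂) :
    SGe (E ::ₘ Γ₁) (B ::ₘ Γ₂) :=
  (h.consL (A := E)).consR ⟨E, Multiset.mem_cons_self _ _, hE⟩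

theorem SGe.tail {B : Fm} {Γ₁ Γ₂ : Multiset Fm} (h : SGe Γ₁ (B ::ₘ Γ₂)) : SGe Γ₁ Γ₂ :=
  fun F hF => h F (Multiset.mem_cons_of_mem hF)

/-- Replace the head of the strong side by a yet stronger formula. -/
theorem SGe.replace {E E' : Fm} {Γ' X : Multiset Fm} (h : SGe (E ::ₘ Γ') X)
    (hE : Fm.ge E' E) : SGe (E' ::ₘ Γ') X := by
  intro F hF
  obtain ⟨W, hW, hge⟩ := h F hF
  rcases Multiset.mem_cons.1 hW with rfl | hW
  · exact ⟨E', Multiset.mem_cons_self _ _, Fm.ge_trans hE hge⟩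
  · exact ⟨W, Multiset.mem_cons_of_mem hW, hge⟩

/-! #### Bounds on constants, for picking fresh eigenvariables -/

def Tm.bnd : Tm → ℕ
  | .var _ => 0
  | .const c => c + 1

def Fm.bnd : Fm → ℕ
  | .top => 0
  | .bot => 0
  | .atom _ ts => (ts.map Tm.bnd).foldr max 0
  | .conj a b => max a.bnd b.bnd
  | .disj a b => max a.bnd b.bnd
  | .imp a b => max a.bnd b.bnd
  | .ex a => a.bnd
  | .all a => a.bnd

theorem Tm.lt_bnd_of_constIn {c : ℕ} {t : Tm} (h : t.constIn c) : c < t.bnd := by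
  cases t with
  | var n => exact absurd h id
  | const d => cases h; simp [Tm.bnd]

theorem List.le_foldr_max {l : List ℕ} {a : ℕ} (h : a ∈ l) : a ≤ l.foldr max 0 := by
  induction l with
  | nil => cases h
  | cons b l ih =>
      rcases List.mem_cons.1 h with rfl | h
      · exact le_max_left _ _
      · exact le_trans (ih h) (le_max_right _ _)

theorem Fm.lt_bnd_of_constIn {c : ℕ} {F : Fm} (h : F.constIn c) : c < F.bnd := by
  induction F with
  | top => exact absurd h id
  | bot => exact absurd h id
  | atom p ts =>
      obtain ⟨t, ht, htc⟩ := h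
      exact lt_of_lt_of_le (Tm.lt_bnd_of_constIn htc)
        (List.le_foldr_max (List.mem_map_of_mem (f := Tm.bnd) ht))
  | conj a b iha ihb =>
      rcases h with h | h
      · exact lt_of_lt_of_le (iha h) (le_max_left _ _)
      · exact lt_of_lt_of_le (ihb h) (le_max_right _ _)
  | disj a b iha ihb =>
      rcases h with h | h
      · exact lt_of_lt_of_le (iha h) (le_max_left _ _)
      · exact lt_of_lt_of_le (ihb h) (le_max_right _ _)
  | imp a b iha ihb =>
      rcases h with h | h
      · exact lt_of_lt_of_le (iha h) (le_max_left _ _)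
      · exact lt_of_lt_of_le (ihb h) (le_max_right _ _)
  | ex a ih => exact ih h
  | all a ih => exact ih h

theorem Fm.not_constIn_of_bnd_le {c : ℕ} {F : Fm} (h : F.bnd ≤ c) : ¬ F.constIn c :=
  fun hc => absurd (Fm.lt_bnd_of_constIn hc) (not_lt.2 h)

def mBnd (M : Multiset Fm) : ℕ := (M.map Fm.bnd).sum

theorem Fm.bnd_le_mBnd {F : Fm} {M : Multiset Fm} (h : F ∈ M) : F.bnd ≤ mBnd M :=
  Multiset.single_le_sum (fun _ _ => Nat.zero_le _) _ (Multiset.mem_map_of_mem _ h)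

theorem mBnd_fresh {M : Multiset Fm} {c : ℕ} (h : mBnd M ≤ c) :
    ∀ F ∈ M, ¬ F.constIn c :=
  fun F hF => Fm.not_constIn_of_bnd_le (le_trans (Fm.bnd_le_mBnd hF) h)

theorem freshSeq_of_le {c : ℕ} {Γ Δ : Multiset Fm} (h1 : mBnd Γ ≤ c) (h2 : mBnd Δ ≤ c) :
    FreshSeq c Γ Δ :=
  ⟨mBnd_fresh h1, mBnd_fresh h2⟩

/-! #### Renaming of constants -/

def Tm.ren (h : ℕ → ℕ) : Tm → Tm
  | .var n => .var n
  | .const c => .const (h c)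

def Fm.ren (h : ℕ → ℕ) : Fm → Fm
  | .top => .top
  | .bot => .bot
  | .atom p ts => .atom p (ts.map (Tm.ren h))
  | .conj a b => .conj (a.ren h) (b.ren h)
  | .disj a b => .disj (a.ren h) (b.ren h)
  | .imp a b => .imp (a.ren h) (b.ren h)
  | .ex a => .ex (a.ren h)
  | .all a => .all (a.ren h)

theorem Tm.ren_subst (h : ℕ → ℕ) (k : ℕ) (u t : Tm) :
    (Tm.subst k u t).ren h = Tm.subst k (u.ren h) (t.ren h) := by
  cases t with
  | var n => by_cases hn : n = k <;> simp [Tm.subst, Tm.ren, hn]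
  | const d => simp [Tm.subst, Tm.ren]

theorem Fm.ren_subst (h : ℕ → ℕ) (k : ℕ) (u : Tm) (F : Fm) :
    (F.subst k u).ren h = (F.ren h).subst k (u.ren h) := by
  induction F generalizing k with
  | top => rfl
  | bot => rfl
  | atom p ts => simp [Fm.subst, Fm.ren, List.map_map, Function.comp, Tm.ren_subst]
  | conj a b iha ihb => simp [Fm.subst, Fm.ren, iha, ihb]
  | disj a b iha ihb => simp [Fm.subst, Fm.ren, iha, ihb]
  | imp a b iha ihb => simp [Fm.subst, Fm.ren, iha, ihb]
  | ex a ih => simp [Fm.subst, Fm.ren, ih]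
  | all a ih => simp [Fm.subst, Fm.ren, ih]

theorem Fm.ren_inst (h : ℕ → ℕ) (u : Tm) (F : Fm) :
    (F.inst u).ren h = (F.ren h).inst (u.ren h) := by
  simp [Fm.inst, Fm.ren_subst]

theorem Tm.ren_congr {h h' : ℕ → ℕ} {t : Tm} (H : ∀ c, t.constIn c → h c = h' c) :
    t.ren h = t.ren h' := by
  cases t with
  | var n => rfl
  | const d => simp [Tm.ren, H d rfl]

theorem Fm.ren_congr {h h' : ℕ → ℕ} {F : Fm} (H : ∀ c, F.constIn c → h c = h' c) :
    F.ren h = F.ren h' := by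
  induction F with
  | top => rfl
  | bot => rfl
  | atom p ts =>
      simp only [Fm.ren, Fm.atom.injEq, true_and]
      exact List.map_congr_left fun t ht =>
        Tm.ren_congr fun c hc => H c ⟨t, ht, hc⟩
  | conj a b iha ihb =>
      simp only [Fm.ren, Fm.conj.injEq]
      exact ⟨iha fun c hc => H c (Or.inl hc), ihb fun c hc => H c (Or.inr hc)⟩
  | disj a b iha ihb =>
      simp only [Fm.ren, Fm.disj.injEq]
      exact ⟨iha fun c hc => H c (Or.inl hc), ihb fun c hc => H c (Or.inr hc)⟩
  | imp a b iha ihb =>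
      simp only [Fm.ren, Fm.imp.injEq]
      exact ⟨iha fun c hc => H c (Or.inl hc), ihb fun c hc => H c (Or.inr hc)⟩
  | ex a ih => simp only [Fm.ren, Fm.ex.injEq]; exact ih fun c hc => H c hc
  | all a ih => simp only [Fm.ren, Fm.all.injEq]; exact ih fun c hc => H c hc

theorem Tm.ren_id (t : Tm) : t.ren id = t := by cases t <;> rfl

theorem Fm.ren_id (F : Fm) : F.ren id = F := by
  induction F with
  | top => rfl
  | bot => rfl
  | atom p ts => simp [Fm.ren, List.map_congr_left fun t _ => Tm.ren_id t]
  | conj a b iha ihb => simp [Fm.ren, iha, ihb]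
  | disj a b iha ihb => simp [Fm.ren, iha, ihb]
  | imp a b iha ihb => simp [Fm.ren, iha, ihb]
  | ex a ih => simp [Fm.ren, ih]
  | all a ih => simp [Fm.ren, ih]

theorem Fm.ren_id' {h : ℕ → ℕ} {F : Fm} (H : ∀ c, F.constIn c → h c = c) :
    F.ren h = F := by
  rw [Fm.ren_congr (h' := id) H, Fm.ren_id]

/-- Updating a renaming at one point. -/
def updR (h : ℕ → ℕ) (c e : ℕ) : ℕ → ℕ := fun x => if x = c then e else h x

theorem Fm.ren_updR_eq {h : ℕ → ℕ} {c e : ℕ} {F : Fm} (hF : ¬ F.constIn c) :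
    F.ren (updR h c e) = F.ren h :=
  Fm.ren_congr fun d hd => by
    have : d ≠ c := fun h' => hF (h' ▸ hd)
    simp [updR, this]

theorem Multiset.ren_updR_eq {h : ℕ → ℕ} {c e : ℕ} {M : Multiset Fm}
    (hM : ∀ F ∈ M, ¬ F.constIn c) :
    M.map (Fm.ren (updR h c e)) = M.map (Fm.ren h) :=
  Multiset.map_congr rfl fun F hF => Fm.ren_updR_eq (hM F hF)

theorem Multiset.ren_self_eq {h : ℕ → ℕ} {M : Multiset Fm}
    (hM : ∀ F ∈ M, ∀ c, F.constIn c → h c = c) :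
    M.map (Fm.ren h) = M := by
  rw [Multiset.map_congr rfl fun F hF => Fm.ren_id' (hM F hF)]
  exact Multiset.map_id' M

theorem Fm.isAtom_ren {h : ℕ → ℕ} {A : Fm} (hA : A.isAtom) : (A.ren h).isAtom := by
  cases A <;> simp_all [Fm.isAtom, Fm.ren]

theorem AxSeq.ren {h : ℕ → ℕ} {Γ Δ : Multiset Fm} (ha : AxSeq Γ Δ) :
    AxSeq (Γ.map (Fm.ren h)) (Δ.map (Fm.ren h)) := by
  rcases ha with htop | ⟨A, hA, hAΓ, hAΔ⟩
  · exact Or.inl (by simpa [Fm.ren] using Multiset.mem_map_of_mem (Fm.ren h) htop)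
  · refine Or.inr ⟨A.ren h, ?_, Multiset.mem_map_of_mem _ hAΓ, Multiset.mem_map_of_mem _ hAΔ⟩
    rcases hA with rfl | hA
    · exact Or.inl rfl
    · exact Or.inr (Fm.isAtom_ren hA)

theorem AxSeq.sge {Γ₂ Δ₂ Γ₁ Δ₁ : Multiset Fm} (ha : AxSeq Γ₂ Δ₂) (hg : SGe Γ₁ Γ₂)
    (hd : Δ₂ ≤ Δ₁) : AxSeq Γ₁ Δ₁ := by
  rcases ha with htop | ⟨A, hA, hAΓ, hAΔ⟩
  · exact Or.inl (Multiset.subset_of_le hd htop)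
  · obtain ⟨E, hE, hge⟩ := hg A hAΓ
    refine Or.inr ⟨A, hA, ?_, Multiset.subset_of_le hd hAΔ⟩
    rwa [← Fm.ge_eq_of_atom hA hge]

/-- Height of a C-proof (positive, for strong induction). -/
def CProof.hgt : ∀ {Γ Δ : Multiset Fm}, CProof Γ Δ → ℕ
  | _, _, .ax _ => 1
  | _, _, .contrL p => p.hgt + 1
  | _, _, .contrR p => p.hgt + 1
  | _, _, .botR p => p.hgt + 1
  | _, _, .andL p => p.hgt + 1
  | _, _, .andR p q => max p.hgt q.hgt + 1
  | _, _, .orL p q => max p.hgt q.hgt + 1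
  | _, _, .orR1 p => p.hgt + 1
  | _, _, .orR2 p => p.hgt + 1
  | _, _, .impL p q => max p.hgt q.hgt + 1
  | _, _, .impR p => p.hgt + 1
  | _, _, .allL _ p => p.hgt + 1
  | _, _, .exR _ p => p.hgt + 1
  | _, _, .exL _ _ p => p.hgt + 1
  | _, _, .allR _ _ p => p.hgt + 1

theorem CProof.isI_card {Γ Δ : Multiset Fm} (p : CProof Γ Δ) (h : p.isI) :
    Multiset.card Δ = 1 := by
  cases p <;> first | exact h | exact h.1

open Classical in
theorem ite_le_ite_of_imp {c₁ c₂ : Prop} (h : c₁ → c₂) :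
    (if c₂ then 0 else 1) ≤ (if c₁ then (0:ℕ) else 1) := by
  by_cases h1 : c₁
  · simp [h1, h h1]
  · by_cases h2 : c₂ <;> simp [h1, h2]

/-- If the succedent of an I-proof's conclusion is a cons, the tail is empty. -/
theorem card_cons_eq_one {B : Fm} {Δ : Multiset Fm} (h : Multiset.card (B ::ₘ Δ) = 1) :
    Δ = 0 := by
  rw [Multiset.card_cons] at h
  exact Multiset.card_eq_zero.1 (by omega)

theorem cons_le_split {B : Fm} {Δ0 Δ₁ : Multiset Fm} (h : B ::ₘ Δ0 ≤ Δ₁) :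
    ∃ Δ', Δ₁ = B ::ₘ Δ' ∧ Δ0 ≤ Δ' := by
  have hB : B ∈ Δ₁ := Multiset.subset_of_le h (Multiset.mem_cons_self _ _)
  refine ⟨Δ₁.erase B, (Multiset.cons_erase hB).symm, ?_⟩
  rw [← Multiset.cons_erase hB] at h
  exact (Multiset.cons_le_cons_iff B).1 h

/-- Cast a proof along equalities of its end-sequent. -/
def CProof.ofEq {Γ Δ Γ' Δ' : Multiset Fm} (p : CProof Γ Δ) (h1 : Γ = Γ') (h2 : Δ = Δ') :
    CProof Γ' Δ' := h1 ▸ h2 ▸ p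

@[simp] theorem CProof.hgt_ofEq {Γ Δ Γ' Δ' : Multiset Fm} (p : CProof Γ Δ) (h1 : Γ = Γ')
    (h2 : Δ = Δ') : (p.ofEq h1 h2).hgt = p.hgt := by subst h1; subst h2; rfl

@[simp] theorem CProof.mu_ofEq {Γ Δ Γ' Δ' : Multiset Fm} (p : CProof Γ Δ) (h1 : Γ = Γ')
    (h2 : Δ = Δ') : (p.ofEq h1 h2).mu = p.mu := by subst h1; subst h2; rfl

@[simp] theorem CProof.isI_ofEq {Γ Δ Γ' Δ' : Multiset Fm} (p : CProof Γ Δ) (h1 : Γ = Γ')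
    (h2 : Δ = Δ') : (p.ofEq h1 h2).isI ↔ p.isI := by subst h1; subst h2; rfl

/-! #### Renaming constants in C-proofs -/

theorem CProof.renameI : ∀ {Γ Δ : Multiset Fm} (p : CProof Γ Δ) (h : ℕ → ℕ),
    ∃ q : CProof (Γ.map (Fm.ren h)) (Δ.map (Fm.ren h)),
      q.hgt = p.hgt ∧ (p.isI → q.isI) := by
  intro Γ Δ p
  induction p with
  | @ax Γ Δ ha =>
      intro h
      refine ⟨.ax (AxSeq.ren ha), rfl, fun hI => ?_⟩
      simp only [CProof.isI, Multiset.card_map] at hI ⊢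
      exact hI
  | @contrL B Γ Δ p ih =>
      intro h
      obtain ⟨q, hq, hqI⟩ := ih h
      refine ⟨(CProof.contrL (q.ofEq (show Multiset.map (Fm.ren h) (B ::ₘ B ::ₘ Γ) = Fm.ren h B ::ₘ Fm.ren h B ::ₘ Multiset.map (Fm.ren h) Γ by simp [Fm.ren, Fm.ren_inst]) rfl)).ofEq (by simp) rfl, by simp [CProof.hgt, hq], fun hI => ?_⟩
      simp only [CProof.isI_ofEq, CProof.isI, Multiset.card_map, Multiset.card_cons] at hI ⊢
      exact ⟨hI.1, hqI hI.2⟩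
  | @contrR B Γ Δ p ih =>
      intro h
      obtain ⟨q, hq, hqI⟩ := ih h
      refine ⟨(CProof.contrR (q.ofEq rfl (show Multiset.map (Fm.ren h) (B ::ₘ B ::ₘ Δ) = Fm.ren h B ::ₘ Fm.ren h B ::ₘ Multiset.map (Fm.ren h) Δ by simp [Fm.ren, Fm.ren_inst]))).ofEq rfl (by simp), by simp [CProof.hgt, hq], fun hI => ?_⟩
      simp only [CProof.isI_ofEq, CProof.isI, Multiset.card_map, Multiset.card_cons] at hI ⊢
      exact ⟨hI.1, hqI hI.2⟩
  | @botR D Γ Δ p ih =>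
      intro h
      obtain ⟨q, hq, hqI⟩ := ih h
      refine ⟨(CProof.botR (D := Fm.ren h D) (q.ofEq rfl (show Multiset.map (Fm.ren h) (Fm.bot ::ₘ Δ) = Fm.bot ::ₘ Multiset.map (Fm.ren h) Δ by simp [Fm.ren, Fm.ren_inst]))).ofEq rfl (by simp [Fm.ren]), by simp [CProof.hgt, hq], fun hI => ?_⟩
      simp only [CProof.isI_ofEq, CProof.isI, Multiset.card_map, Multiset.card_cons] at hI ⊢
      exact ⟨hI.1, hqI hI.2⟩
  | @andL B D Γ Δ p ih =>
      intro h
      obtain ⟨q, hq, hqI⟩ := ih h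
      refine ⟨(CProof.andL (q.ofEq (show Multiset.map (Fm.ren h) (B ::ₘ D ::ₘ (B.conj D) ::ₘ Γ) = Fm.ren h B ::ₘ Fm.ren h D ::ₘ ((Fm.ren h B).conj (Fm.ren h D)) ::ₘ Multiset.map (Fm.ren h) Γ by simp [Fm.ren, Fm.ren_inst]) rfl)).ofEq (by simp [Fm.ren]) rfl, by simp [CProof.hgt, hq], fun hI => ?_⟩
      simp only [CProof.isI_ofEq, CProof.isI, Multiset.card_map, Multiset.card_cons] at hI ⊢
      exact ⟨hI.1, hqI hI.2⟩
  | @orR1 B D Γ Δ p ih =>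
      intro h
      obtain ⟨q, hq, hqI⟩ := ih h
      refine ⟨(CProof.orR1 (D := Fm.ren h D) (q.ofEq rfl (show Multiset.map (Fm.ren h) (B ::ₘ Δ) = Fm.ren h B ::ₘ Multiset.map (Fm.ren h) Δ by simp [Fm.ren, Fm.ren_inst]))).ofEq rfl (by simp [Fm.ren]), by simp [CProof.hgt, hq], fun hI => ?_⟩
      simp only [CProof.isI_ofEq, CProof.isI, Multiset.card_map, Multiset.card_cons] at hI ⊢
      exact ⟨hI.1, hqI hI.2⟩
  | @orR2 B D Γ Δ p ih =>
      intro h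
      obtain ⟨q, hq, hqI⟩ := ih h
      refine ⟨(CProof.orR2 (B := Fm.ren h B) (q.ofEq rfl (show Multiset.map (Fm.ren h) (D ::ₘ Δ) = Fm.ren h D ::ₘ Multiset.map (Fm.ren h) Δ by simp [Fm.ren, Fm.ren_inst]))).ofEq rfl (by simp [Fm.ren]), by simp [CProof.hgt, hq], fun hI => ?_⟩
      simp only [CProof.isI_ofEq, CProof.isI, Multiset.card_map, Multiset.card_cons] at hI ⊢
      exact ⟨hI.1, hqI hI.2⟩
  | @allL B Γ Δ t p ih =>
      intro h
      obtain ⟨q, hq, hqI⟩ := ih h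
      refine ⟨(CProof.allL (t.ren h) (q.ofEq (show Multiset.map (Fm.ren h) ((B.inst t) ::ₘ (Fm.all B) ::ₘ Γ) = ((Fm.ren h B).inst (t.ren h)) ::ₘ (Fm.all (Fm.ren h B)) ::ₘ Multiset.map (Fm.ren h) Γ by simp [Fm.ren, Fm.ren_inst]) rfl)).ofEq (by simp [Fm.ren]) rfl, by simp [CProof.hgt, hq], fun hI => ?_⟩
      simp only [CProof.isI_ofEq, CProof.isI, Multiset.card_map, Multiset.card_cons] at hI ⊢
      exact ⟨hI.1, hqI hI.2⟩
  | @exR B Γ Δ t p ih =>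
      intro h
      obtain ⟨q, hq, hqI⟩ := ih h
      refine ⟨(CProof.exR (t.ren h) (q.ofEq rfl (show Multiset.map (Fm.ren h) ((B.inst t) ::ₘ Δ) = ((Fm.ren h B).inst (t.ren h)) ::ₘ Multiset.map (Fm.ren h) Δ by simp [Fm.ren, Fm.ren_inst]))).ofEq rfl (by simp [Fm.ren]), by simp [CProof.hgt, hq], fun hI => ?_⟩
      simp only [CProof.isI_ofEq, CProof.isI, Multiset.card_map, Multiset.card_cons] at hI ⊢
      exact ⟨hI.1, hqI hI.2⟩
  | @impR B D Γ Δ p ih =>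
      intro h
      obtain ⟨q, hq, hqI⟩ := ih h
      refine ⟨(CProof.impR (q.ofEq (show Multiset.map (Fm.ren h) (B ::ₘ Γ) = Fm.ren h B ::ₘ Multiset.map (Fm.ren h) Γ by simp [Fm.ren, Fm.ren_inst]) (show Multiset.map (Fm.ren h) (D ::ₘ Δ) = Fm.ren h D ::ₘ Multiset.map (Fm.ren h) Δ by simp [Fm.ren, Fm.ren_inst]))).ofEq rfl (by simp [Fm.ren]), by simp [CProof.hgt, hq], fun hI => ?_⟩
      simp only [CProof.isI_ofEq, CProof.isI, Multiset.card_map, Multiset.card_cons] at hI ⊢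
      exact ⟨hI.1, hqI hI.2⟩
  | @andR B D Γ Δ p₁ p₂ ih₁ ih₂ =>
      intro h
      obtain ⟨q₁, hq₁, hqI₁⟩ := ih₁ h
      obtain ⟨q₂, hq₂, hqI₂⟩ := ih₂ h
      refine ⟨(CProof.andR (q₁.ofEq rfl (show Multiset.map (Fm.ren h) (B ::ₘ Δ) = Fm.ren h B ::ₘ Multiset.map (Fm.ren h) Δ by simp [Fm.ren, Fm.ren_inst])) (q₂.ofEq rfl (show Multiset.map (Fm.ren h) (D ::ₘ Δ) = Fm.ren h D ::ₘ Multiset.map (Fm.ren h) Δ by simp [Fm.ren, Fm.ren_inst]))).ofEq rfl (by simp [Fm.ren]), by simp [CProof.hgt, hq₁, hq₂], fun hI => ?_⟩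
      simp only [CProof.isI_ofEq, CProof.isI, Multiset.card_map, Multiset.card_cons,
        Multiset.card_add] at hI ⊢
      exact ⟨hI.1, hqI₁ hI.2.1, hqI₂ hI.2.2⟩
  | @orL B D Γ Δ p₁ p₂ ih₁ ih₂ =>
      intro h
      obtain ⟨q₁, hq₁, hqI₁⟩ := ih₁ h
      obtain ⟨q₂, hq₂, hqI₂⟩ := ih₂ h
      refine ⟨(CProof.orL (q₁.ofEq (show Multiset.map (Fm.ren h) (B ::ₘ Γ) = Fm.ren h B ::ₘ Multiset.map (Fm.ren h) Γ by simp [Fm.ren, Fm.ren_inst]) rfl) (q₂.ofEq (show Multiset.map (Fm.ren h) (D ::ₘ Γ) = Fm.ren h D ::ₘ Multiset.map (Fm.ren h) Γ by simp [Fm.ren, Fm.ren_inst]) rfl)).ofEq (by simp [Fm.ren]) rfl, by simp [CProof.hgt, hq₁, hq₂], fun hI => ?_⟩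
      simp only [CProof.isI_ofEq, CProof.isI, Multiset.card_map, Multiset.card_cons,
        Multiset.card_add] at hI ⊢
      exact ⟨hI.1, hqI₁ hI.2.1, hqI₂ hI.2.2⟩
  | @impL B D Γ Δ Θ p₁ p₂ ih₁ ih₂ =>
      intro h
      obtain ⟨q₁, hq₁, hqI₁⟩ := ih₁ h
      obtain ⟨q₂, hq₂, hqI₂⟩ := ih₂ h
      refine ⟨(CProof.impL (q₁.ofEq (show Multiset.map (Fm.ren h) ((B.imp D) ::ₘ Γ) = ((Fm.ren h B).imp (Fm.ren h D)) ::ₘ Multiset.map (Fm.ren h) Γ by simp [Fm.ren, Fm.ren_inst]) (show Multiset.map (Fm.ren h) (B ::ₘ Δ) = Fm.ren h B ::ₘ Multiset.map (Fm.ren h) Δ by simp [Fm.ren, Fm.ren_inst])) (q₂.ofEq (show Multiset.map (Fm.ren h) (D ::ₘ Γ) = Fm.ren h D ::ₘ Multiset.map (Fm.ren h) Γ by simp [Fm.ren, Fm.ren_inst]) rfl)).ofEq (by simp [Fm.ren]) (by simp), by simp [CProof.hgt, hq₁, hq₂], fun hI => ?_⟩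
      simp only [CProof.isI_ofEq, CProof.isI, Multiset.card_map, Multiset.card_cons,
        Multiset.card_add] at hI ⊢
      exact ⟨hI.1, hqI₁ hI.2.1, hqI₂ hI.2.2⟩
  | @exL B Γ Δ c hc p ih =>
      intro h
      set e := mBnd (Fm.ex (B.ren h) ::ₘ Γ.map (Fm.ren h)) + mBnd (Δ.map (Fm.ren h)) with he
      obtain ⟨q, hq, hqI⟩ := ih (updR h c e)
      have hBc : ¬ B.constIn c := fun hx => hc.1 (Fm.ex B) (Multiset.mem_cons_self _ _) hx
      have hΓc : ∀ F ∈ Γ, ¬ F.constIn c := fun F hF => hc.1 F (Multiset.mem_cons_of_mem hF)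
      have e1 : Fm.ren (updR h c e) (B.inst (Tm.const c)) = (B.ren h).inst (Tm.const e) := by
        rw [Fm.ren_inst]
        congr 1
        · simp [Tm.ren, updR]
        · exact Fm.ren_updR_eq hBc
      have h1 : ((B.inst (Tm.const c)) ::ₘ Γ).map (Fm.ren (updR h c e)) =
          (B.ren h).inst (Tm.const e) ::ₘ Γ.map (Fm.ren h) := by
        rw [Multiset.map_cons, e1, Multiset.ren_updR_eq hΓc]
      have h2 : Δ.map (Fm.ren (updR h c e)) = Δ.map (Fm.ren h) := Multiset.ren_updR_eq hc.2
      refine ⟨(CProof.exL e (freshSeq_of_le (Nat.le_add_right _ _) (Nat.le_add_left _ _)) (q.ofEq h1 h2)).ofEq (by simp [Fm.ren]) rfl, by simp [CProof.hgt, hq], fun hI => ?_⟩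
      simp only [CProof.isI_ofEq, CProof.isI, Multiset.card_map] at hI ⊢
      exact ⟨hI.1, hqI hI.2⟩
  | @allR B Γ Δ c hc p ih =>
      intro h
      set e := mBnd (Γ.map (Fm.ren h)) + mBnd (Fm.all (B.ren h) ::ₘ Δ.map (Fm.ren h)) with he
      obtain ⟨q, hq, hqI⟩ := ih (updR h c e)
      have hBc : ¬ B.constIn c := fun hx => hc.2 (Fm.all B) (Multiset.mem_cons_self _ _) hx
      have hΔc : ∀ F ∈ Δ, ¬ F.constIn c := fun F hF => hc.2 F (Multiset.mem_cons_of_mem hF)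
      have e1 : Fm.ren (updR h c e) (B.inst (Tm.const c)) = (B.ren h).inst (Tm.const e) := by
        rw [Fm.ren_inst]
        congr 1
        · simp [Tm.ren, updR]
        · exact Fm.ren_updR_eq hBc
      have h1 : Γ.map (Fm.ren (updR h c e)) = Γ.map (Fm.ren h) := Multiset.ren_updR_eq hc.1
      have h2 : ((B.inst (Tm.const c)) ::ₘ Δ).map (Fm.ren (updR h c e)) =
          (B.ren h).inst (Tm.const e) ::ₘ Δ.map (Fm.ren h) := by
        rw [Multiset.map_cons, e1, Multiset.ren_updR_eq hΔc]
      refine ⟨(CProof.allR e (freshSeq_of_le (Nat.le_add_right _ _) (Nat.le_add_left _ _)) (q.ofEq h1 h2)).ofEq rfl (by simp [Fm.ren]), by simp [CProof.hgt, hq], fun hI => ?_⟩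
      simp only [CProof.isI_ofEq, CProof.isI, Multiset.card_map, Multiset.card_cons] at hI ⊢
      exact ⟨hI.1, hqI hI.2⟩

theorem IProv.ren {Γ : Multiset Fm} {F : Fm} (hF : IProv Γ F) (h : ℕ → ℕ) :
    IProv (Γ.map (Fm.ren h)) (F.ren h) := by
  obtain ⟨p, hp⟩ := hF
  obtain ⟨q, _, hqI⟩ := p.renameI h
  exact ⟨q.ofEq rfl (by simp), (CProof.isI_ofEq _ _ _).2 (hqI hp)⟩

theorem CProof.renameC : ∀ {Γ Δ : Multiset Fm} (p : CProof Γ Δ) (h : ℕ → ℕ),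
    ∃ q : CProof (Γ.map (Fm.ren h)) (Δ.map (Fm.ren h)),
      q.hgt = p.hgt ∧ q.mu ≤ p.mu := by
  intro Γ Δ p
  induction p with
  | @ax Γ Δ ha =>
      intro h
      exact ⟨.ax (AxSeq.ren ha), rfl, le_refl _⟩
  | @contrL B Γ Δ p ih =>
      intro h
      obtain ⟨q, hq, hqm⟩ := ih h
      exact ⟨(CProof.contrL (q.ofEq (show Multiset.map (Fm.ren h) (B ::ₘ B ::ₘ Γ) = Fm.ren h B ::ₘ Fm.ren h B ::ₘ Multiset.map (Fm.ren h) Γ by simp [Fm.ren, Fm.ren_inst]) rfl)).ofEq (by simp) rfl, by simp [CProof.hgt, hq],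
        by simpa [CProof.mu] using hqm⟩
  | @contrR B Γ Δ p ih =>
      intro h
      obtain ⟨q, hq, hqm⟩ := ih h
      exact ⟨(CProof.contrR (q.ofEq rfl (show Multiset.map (Fm.ren h) (B ::ₘ B ::ₘ Δ) = Fm.ren h B ::ₘ Fm.ren h B ::ₘ Multiset.map (Fm.ren h) Δ by simp [Fm.ren, Fm.ren_inst]))).ofEq rfl (by simp), by simp [CProof.hgt, hq],
        by simpa [CProof.mu] using hqm⟩
  | @botR D Γ Δ p ih =>
      intro h
      obtain ⟨q, hq, hqm⟩ := ih h
      exact ⟨(CProof.botR (D := Fm.ren h D) (q.ofEq rfl (show Multiset.map (Fm.ren h) (Fm.bot ::ₘ Δ) = Fm.bot ::ₘ Multiset.map (Fm.ren h) Δ by simp [Fm.ren, Fm.ren_inst]))).ofEq rfl (by simp [Fm.ren]), by simp [CProof.hgt, hq],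
        by simpa [CProof.mu] using hqm⟩
  | @andL B D Γ Δ p ih =>
      intro h
      obtain ⟨q, hq, hqm⟩ := ih h
      exact ⟨(CProof.andL (q.ofEq (show Multiset.map (Fm.ren h) (B ::ₘ D ::ₘ (B.conj D) ::ₘ Γ) = Fm.ren h B ::ₘ Fm.ren h D ::ₘ ((Fm.ren h B).conj (Fm.ren h D)) ::ₘ Multiset.map (Fm.ren h) Γ by simp [Fm.ren, Fm.ren_inst]) rfl)).ofEq (by simp [Fm.ren]) rfl, by simp [CProof.hgt, hq],
        by simpa [CProof.mu] using hqm⟩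
  | @orR1 B D Γ Δ p ih =>
      intro h
      obtain ⟨q, hq, hqm⟩ := ih h
      exact ⟨(CProof.orR1 (D := Fm.ren h D) (q.ofEq rfl (show Multiset.map (Fm.ren h) (B ::ₘ Δ) = Fm.ren h B ::ₘ Multiset.map (Fm.ren h) Δ by simp [Fm.ren, Fm.ren_inst]))).ofEq rfl (by simp [Fm.ren]), by simp [CProof.hgt, hq],
        by simpa [CProof.mu] using hqm⟩
  | @orR2 B D Γ Δ p ih =>
      intro h
      obtain ⟨q, hq, hqm⟩ := ih h
      exact ⟨(CProof.orR2 (B := Fm.ren h B) (q.ofEq rfl (show Multiset.map (Fm.ren h) (D ::ₘ Δ) = Fm.ren h D ::ₘ Multiset.map (Fm.ren h) Δ by simp [Fm.ren, Fm.ren_inst]))).ofEq rfl (by simp [Fm.ren]), by simp [CProof.hgt, hq],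
        by simpa [CProof.mu] using hqm⟩
  | @allL B Γ Δ t p ih =>
      intro h
      obtain ⟨q, hq, hqm⟩ := ih h
      exact ⟨(CProof.allL (t.ren h) (q.ofEq (show Multiset.map (Fm.ren h) ((B.inst t) ::ₘ (Fm.all B) ::ₘ Γ) = ((Fm.ren h B).inst (t.ren h)) ::ₘ (Fm.all (Fm.ren h B)) ::ₘ Multiset.map (Fm.ren h) Γ by simp [Fm.ren, Fm.ren_inst]) rfl)).ofEq (by simp [Fm.ren]) rfl, by simp [CProof.hgt, hq],
        by simpa [CProof.mu] using hqm⟩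
  | @exR B Γ Δ t p ih =>
      intro h
      obtain ⟨q, hq, hqm⟩ := ih h
      exact ⟨(CProof.exR (t.ren h) (q.ofEq rfl (show Multiset.map (Fm.ren h) ((B.inst t) ::ₘ Δ) = ((Fm.ren h B).inst (t.ren h)) ::ₘ Multiset.map (Fm.ren h) Δ by simp [Fm.ren, Fm.ren_inst]))).ofEq rfl (by simp [Fm.ren]), by simp [CProof.hgt, hq],
        by simpa [CProof.mu] using hqm⟩
  | @impR B D Γ Δ p ih =>
      intro h
      obtain ⟨q, hq, hqm⟩ := ih h
      refine ⟨(CProof.impR (q.ofEq (show Multiset.map (Fm.ren h) (B ::ₘ Γ) = Fm.ren h B ::ₘ Multiset.map (Fm.ren h) Γ by simp [Fm.ren, Fm.ren_inst]) (show Multiset.map (Fm.ren h) (D ::ₘ Δ) = Fm.ren h D ::ₘ Multiset.map (Fm.ren h) Δ by simp [Fm.ren, Fm.ren_inst]))).ofEq rfl (by simp [Fm.ren]), by simp [CProof.hgt, hq], ?_⟩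
      simp only [CProof.mu_ofEq, CProof.mu]
      refine add_le_add hqm (ite_le_ite_of_imp ?_)
      intro h1
      simpa [Multiset.map_cons] using h1.ren h
  | @andR B D Γ Δ p₁ p₂ ih₁ ih₂ =>
      intro h
      obtain ⟨q₁, hq₁, hqm₁⟩ := ih₁ h
      obtain ⟨q₂, hq₂, hqm₂⟩ := ih₂ h
      refine ⟨(CProof.andR (q₁.ofEq rfl (show Multiset.map (Fm.ren h) (B ::ₘ Δ) = Fm.ren h B ::ₘ Multiset.map (Fm.ren h) Δ by simp [Fm.ren, Fm.ren_inst])) (q₂.ofEq rfl (show Multiset.map (Fm.ren h) (D ::ₘ Δ) = Fm.ren h D ::ₘ Multiset.map (Fm.ren h) Δ by simp [Fm.ren, Fm.ren_inst]))).ofEq rfl (by simp [Fm.ren]), by simp [CProof.hgt, hq₁, hq₂], ?_⟩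
      simp only [CProof.mu_ofEq, CProof.mu]
      exact add_le_add hqm₁ hqm₂
  | @orL B D Γ Δ p₁ p₂ ih₁ ih₂ =>
      intro h
      obtain ⟨q₁, hq₁, hqm₁⟩ := ih₁ h
      obtain ⟨q₂, hq₂, hqm₂⟩ := ih₂ h
      refine ⟨(CProof.orL (q₁.ofEq (show Multiset.map (Fm.ren h) (B ::ₘ Γ) = Fm.ren h B ::ₘ Multiset.map (Fm.ren h) Γ by simp [Fm.ren, Fm.ren_inst]) rfl) (q₂.ofEq (show Multiset.map (Fm.ren h) (D ::ₘ Γ) = Fm.ren h D ::ₘ Multiset.map (Fm.ren h) Γ by simp [Fm.ren, Fm.ren_inst]) rfl)).ofEq (by simp [Fm.ren]) rfl, by simp [CProof.hgt, hq₁, hq₂], ?_⟩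
      simp only [CProof.mu_ofEq, CProof.mu]
      refine add_le_add (add_le_add hqm₁ hqm₂) (ite_le_ite_of_imp ?_)
      rintro ⟨F, hF, ha, hb⟩
      refine ⟨F.ren h, Multiset.mem_map_of_mem _ hF, ?_, ?_⟩
      · simpa [Multiset.map_cons] using ha.ren h
      · simpa [Multiset.map_cons] using hb.ren h
  | @impL B D Γ Δ Θ p₁ p₂ ih₁ ih₂ =>
      intro h
      obtain ⟨q₁, hq₁, hqm₁⟩ := ih₁ h
      obtain ⟨q₂, hq₂, hqm₂⟩ := ih₂ h
      refine ⟨(CProof.impL (q₁.ofEq (show Multiset.map (Fm.ren h) ((B.imp D) ::ₘ Γ) = ((Fm.ren h B).imp (Fm.ren h D)) ::ₘ Multiset.map (Fm.ren h) Γ by simp [Fm.ren, Fm.ren_inst]) (show Multiset.map (Fm.ren h) (B ::ₘ Δ) = Fm.ren h B ::ₘ Multiset.map (Fm.ren h) Δ by simp [Fm.ren, Fm.ren_inst])) (q₂.ofEq (show Multiset.map (Fm.ren h) (D ::ₘ Γ) = Fm.ren h D ::ₘ Multiset.map (Fm.ren h) Γ by simp [Fm.ren, Fm.ren_inst]) rfl)).ofEq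 (by simp [Fm.ren]) (by simp), by simp [CProof.hgt, hq₁, hq₂], ?_⟩
      simp only [CProof.mu_ofEq, CProof.mu]
      exact add_le_add hqm₁ hqm₂
  | @exL B Γ Δ c hc p ih =>
      intro h
      set e := mBnd (Fm.ex (B.ren h) ::ₘ Γ.map (Fm.ren h)) + mBnd (Δ.map (Fm.ren h)) with he
      obtain ⟨q, hq, hqm⟩ := ih (updR h c e)
      have hBc : ¬ B.constIn c := fun hx => hc.1 (Fm.ex B) (Multiset.mem_cons_self _ _) hx
      have hΓc : ∀ F ∈ Γ, ¬ F.constIn c := fun F hF => hc.1 F (Multiset.mem_cons_of_mem hF)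
      have e1 : Fm.ren (updR h c e) (B.inst (Tm.const c)) = (B.ren h).inst (Tm.const e) := by
        rw [Fm.ren_inst]
        congr 1
        · simp [Tm.ren, updR]
        · exact Fm.ren_updR_eq hBc
      have h1 : ((B.inst (Tm.const c)) ::ₘ Γ).map (Fm.ren (updR h c e)) =
          (B.ren h).inst (Tm.const e) ::ₘ Γ.map (Fm.ren h) := by
        rw [Multiset.map_cons, e1, Multiset.ren_updR_eq hΓc]
      have h2 : Δ.map (Fm.ren (updR h c e)) = Δ.map (Fm.ren h) := Multiset.ren_updR_eq hc.2
      exact ⟨(CProof.exL e (freshSeq_of_le (Nat.le_add_right _ _) (Nat.le_add_left _ _)) (q.ofEq h1 h2)).ofEq (by simp [Fm.ren]) rfl, by simp [CProof.hgt, hq], by simpa [CProof.mu] using hqm⟩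
  | @allR B Γ Δ c hc p ih =>
      intro h
      set e := mBnd (Γ.map (Fm.ren h)) + mBnd (Fm.all (B.ren h) ::ₘ Δ.map (Fm.ren h)) with he
      obtain ⟨q, hq, hqm⟩ := ih (updR h c e)
      have hBc : ¬ B.constIn c := fun hx => hc.2 (Fm.all B) (Multiset.mem_cons_self _ _) hx
      have hΔc : ∀ F ∈ Δ, ¬ F.constIn c := fun F hF => hc.2 F (Multiset.mem_cons_of_mem hF)
      have e1 : Fm.ren (updR h c e) (B.inst (Tm.const c)) = (B.ren h).inst (Tm.const e) := by
        rw [Fm.ren_inst]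
        congr 1
        · simp [Tm.ren, updR]
        · exact Fm.ren_updR_eq hBc
      have h1 : Γ.map (Fm.ren (updR h c e)) = Γ.map (Fm.ren h) := Multiset.ren_updR_eq hc.1
      have h2 : ((B.inst (Tm.const c)) ::ₘ Δ).map (Fm.ren (updR h c e)) =
          (B.ren h).inst (Tm.const e) ::ₘ Δ.map (Fm.ren h) := by
        rw [Multiset.map_cons, e1, Multiset.ren_updR_eq hΔc]
      exact ⟨(CProof.allR e (freshSeq_of_le (Nat.le_add_right _ _) (Nat.le_add_left _ _)) (q.ofEq h1 h2)).ofEq rfl (by simp [Fm.ren]), by simp [CProof.hgt, hq], by simpa [CProof.mu] using hqm⟩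

/-! #### Strengthening the antecedent of an I-proof -/

theorem CProof.strI : ∀ (n : ℕ) {Γ₂ Δ : Multiset Fm} (p : CProof Γ₂ Δ), p.hgt ≤ n → p.isI →
    ∀ {Γ₁ : Multiset Fm}, SGe Γ₁ Γ₂ → ∃ q : CProof Γ₁ Δ, q.isI := by
  intro n
  induction n with
  | zero =>
      intro Γ₂ Δ p hp
      exact absurd hp (by cases p <;> simp [CProof.hgt])
  | succ n ih =>
      intro Γ₂ Δ p hp hI Γ₁ hg
      cases p with
      | ax ha =>
          simp only [CProof.isI] at hI
          exact ⟨.ax (AxSeq.sge ha hg le_rfl), hI⟩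
      | @contrL B Γ Δ p0 =>
          simp only [CProof.hgt] at hp
          simp only [CProof.isI] at hI
          exact ih p0 (by omega) hI.2
            (hg.consR (hg _ (Multiset.mem_cons_self _ _)))
      | @contrR B Γ Δ p0 =>
          simp only [CProof.hgt] at hp
          simp only [CProof.isI] at hI
          obtain ⟨q, hqI⟩ := ih p0 (by omega) hI.2 hg
          exact ⟨.contrR q, hI.1, hqI⟩
      | @botR D Γ Δ p0 =>
          simp only [CProof.hgt] at hp
          simp only [CProof.isI] at hI
          obtain ⟨q, hqI⟩ := ih p0 (by omega) hI.2 hg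
          exact ⟨.botR q, hI.1, hqI⟩
      | @andL B D Γ Δ p0 =>
          simp only [CProof.hgt] at hp
          simp only [CProof.isI] at hI
          obtain ⟨E, hE, hgeE⟩ := hg _ (Multiset.mem_cons_self _ _)
          obtain rfl := Fm.ge_conj_inv hgeE
          have hsplit : Γ₁ = (B.conj D) ::ₘ Γ₁.erase (B.conj D) := (Multiset.cons_erase hE).symm
          have htail : SGe ((B.conj D) ::ₘ Γ₁.erase (B.conj D)) Γ := hsplit ▸ hg.tail
          obtain ⟨q, hqI⟩ := ih p0 (by omega) hI.2
            (SGe.cons (Fm.ge.refl B) (SGe.cons (Fm.ge.refl D)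
              (htail.consR ⟨_, Multiset.mem_cons_self _ _, Fm.ge.refl _⟩)))
          refine ⟨(CProof.andL q).ofEq hsplit.symm rfl, ?_⟩
          rw [CProof.isI_ofEq]
          exact ⟨hI.1, hqI⟩
      | @andR B D Γ Δ p₁ p₂ =>
          simp only [CProof.hgt] at hp
          simp only [CProof.isI] at hI
          obtain ⟨q₁, hqI₁⟩ := ih p₁ (show p₁.hgt ≤ n by omega) hI.2.1 hg
          obtain ⟨q₂, hqI₂⟩ := ih p₂ (show p₂.hgt ≤ n by omega) hI.2.2 hg
          exact ⟨.andR q₁ q₂, hI.1, hqI₁, hqI₂⟩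
      | @orL B D Γ Δ p₁ p₂ =>
          simp only [CProof.hgt] at hp
          simp only [CProof.isI] at hI
          obtain ⟨E, hE, hgeE⟩ := hg _ (Multiset.mem_cons_self _ _)
          rcases Fm.ge_disj_inv hgeE with rfl | hEB | hED
          · have hsplit : Γ₁ = (B.disj D) ::ₘ Γ₁.erase (B.disj D) :=
              (Multiset.cons_erase hE).symm
            have htail : SGe ((B.disj D) ::ₘ Γ₁.erase (B.disj D)) Γ := hsplit ▸ hg.tail
            obtain ⟨q₁, hqI₁⟩ := ih p₁ (show p₁.hgt ≤ n by omega) hI.2.1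
              ((htail.replace (Fm.ge.disjl (Fm.ge.refl B))).consR
                ⟨B, Multiset.mem_cons_self _ _, Fm.ge.refl B⟩)
            obtain ⟨q₂, hqI₂⟩ := ih p₂ (show p₂.hgt ≤ n by omega) hI.2.2
              ((htail.replace (Fm.ge.disjr (Fm.ge.refl D))).consR
                ⟨D, Multiset.mem_cons_self _ _, Fm.ge.refl D⟩)
            refine ⟨(CProof.orL q₁ q₂).ofEq hsplit.symm rfl, ?_⟩
            rw [CProof.isI_ofEq]
            exact ⟨hI.1, hqI₁, hqI₂⟩
          · exact ih p₁ (show p₁.hgt ≤ n by omega) hI.2.1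
              (hg.tail.consR ⟨E, hE, hEB⟩)
          · exact ih p₂ (show p₂.hgt ≤ n by omega) hI.2.2
              (hg.tail.consR ⟨E, hE, hED⟩)
      | @orR1 B D Γ Δ p0 =>
          simp only [CProof.hgt] at hp
          simp only [CProof.isI] at hI
          obtain ⟨q, hqI⟩ := ih p0 (by omega) hI.2 hg
          exact ⟨.orR1 q, hI.1, hqI⟩
      | @orR2 B D Γ Δ p0 =>
          simp only [CProof.hgt] at hp
          simp only [CProof.isI] at hI
          obtain ⟨q, hqI⟩ := ih p0 (by omega) hI.2 hg
          exact ⟨.orR2 q, hI.1, hqI⟩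
      | @impL B D Γ Δa Θ p₁ p₂ =>
          simp only [CProof.hgt] at hp
          simp only [CProof.isI] at hI
          have hΔa : Δa = 0 := card_cons_eq_one (p₁.isI_card hI.2.1)
          obtain ⟨E, hE, hgeE⟩ := hg _ (Multiset.mem_cons_self _ _)
          rcases Fm.ge_imp_inv hgeE with rfl | hED
          · have hsplit : Γ₁ = (B.imp D) ::ₘ Γ₁.erase (B.imp D) :=
              (Multiset.cons_erase hE).symm
            have htail : SGe ((B.imp D) ::ₘ Γ₁.erase (B.imp D)) Γ := hsplit ▸ hg.tail
            obtain ⟨q₁, hqI₁⟩ := ih p₁ (show p₁.hgt ≤ n by omega) hI.2.1 hg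
            obtain ⟨q₂, hqI₂⟩ := ih p₂ (show p₂.hgt ≤ n by omega) hI.2.2
              ((htail.replace (Fm.ge.imp (Fm.ge.refl D))).consR
                ⟨D, Multiset.mem_cons_self _ _, Fm.ge.refl D⟩)
            refine ⟨(CProof.impL (q₁.ofEq hsplit rfl) q₂).ofEq hsplit.symm rfl, ?_⟩
            rw [CProof.isI_ofEq]
            exact ⟨hI.1, (CProof.isI_ofEq _ _ _).2 hqI₁, hqI₂⟩
          · obtain ⟨q₂, hqI₂⟩ := ih p₂ (show p₂.hgt ≤ n by omega) hI.2.2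
              (hg.tail.consR ⟨E, hE, hED⟩)
            refine ⟨q₂.ofEq rfl (show Θ = Δa + Θ by simp [hΔa]), ?_⟩
            rw [CProof.isI_ofEq]
            exact hqI₂
      | @impR B D Γ Δ p0 =>
          simp only [CProof.hgt] at hp
          simp only [CProof.isI] at hI
          obtain ⟨q, hqI⟩ := ih p0 (by omega) hI.2 (SGe.cons (Fm.ge.refl B) hg)
          exact ⟨.impR q, hI.1, hqI⟩
      | @allL B Γ Δ t p0 =>
          simp only [CProof.hgt] at hp
          simp only [CProof.isI] at hI
          obtain ⟨E, hE, hgeE⟩ := hg _ (Multiset.mem_cons_self _ _)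
          obtain rfl := Fm.ge_all_inv hgeE
          have hsplit : Γ₁ = (Fm.all B) ::ₘ Γ₁.erase (Fm.all B) := (Multiset.cons_erase hE).symm
          have htail : SGe ((Fm.all B) ::ₘ Γ₁.erase (Fm.all B)) Γ := hsplit ▸ hg.tail
          obtain ⟨q, hqI⟩ := ih p0 (by omega) hI.2
            (SGe.cons (Fm.ge.refl (B.inst t))
              (htail.consR ⟨_, Multiset.mem_cons_self _ _, Fm.ge.refl _⟩))
          refine ⟨(CProof.allL t q).ofEq hsplit.symm rfl, ?_⟩
          rw [CProof.isI_ofEq]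
          exact ⟨hI.1, hqI⟩
      | @exR B Γ Δ t p0 =>
          simp only [CProof.hgt] at hp
          simp only [CProof.isI] at hI
          obtain ⟨q, hqI⟩ := ih p0 (by omega) hI.2 hg
          exact ⟨.exR t q, hI.1, hqI⟩
      | @exL B Γ Δ c hc p0 =>
          simp only [CProof.hgt] at hp
          simp only [CProof.isI] at hI
          have hBc : ¬ B.constIn c := fun hx => hc.1 (Fm.ex B) (Multiset.mem_cons_self _ _) hx
          have hΓc : ∀ F ∈ Γ, ¬ F.constIn c := fun F hF => hc.1 F (Multiset.mem_cons_of_mem hF)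
          obtain ⟨E, hE, hgeE⟩ := hg _ (Multiset.mem_cons_self _ _)
          rcases Fm.ge_ex_inv hgeE with rfl | ⟨c₀, hEc⟩
          · set e := mBnd Γ₁ + mBnd Δ with he
            obtain ⟨p', hh', hpI'⟩ := p0.renameI (updR id c e)
            have h1 : ((B.inst (Tm.const c)) ::ₘ Γ).map (Fm.ren (updR id c e)) =
                (B.inst (Tm.const e)) ::ₘ Γ := by
              rw [Multiset.map_cons]
              congr 1
              · rw [Fm.ren_inst]
                congr 1
                · simp [Tm.ren, updR]
                · exact Fm.ren_id' fun d hd => by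
                    have : d ≠ c := fun h => hBc (h ▸ hd)
                    simp [updR, this]
              · exact Multiset.ren_self_eq fun F hF d hd => by
                  have : d ≠ c := fun h => (hΓc F hF) (h ▸ hd)
                  simp [updR, this]
            have h2 : Δ.map (Fm.ren (updR id c e)) = Δ :=
              Multiset.ren_self_eq fun F hF d hd => by
                have : d ≠ c := fun h => (hc.2 F hF) (h ▸ hd)
                simp [updR, this]
            have hsplit : Γ₁ = (Fm.ex B) ::ₘ Γ₁.erase (Fm.ex B) := (Multiset.cons_erase hE).symm
            have htail : SGe ((Fm.ex B) ::ₘ Γ₁.erase (Fm.ex B)) Γ := hsplit ▸ hg.tail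
            obtain ⟨q, hqI⟩ := ih (p'.ofEq h1 h2)
              (by rw [CProof.hgt_ofEq, hh']; omega)
              ((CProof.isI_ofEq _ _ _).2 (hpI' hI.2))
              ((htail.replace (Fm.ge.ex e (Fm.ge.refl _))).consR
                ⟨_, Multiset.mem_cons_self _ _, Fm.ge.refl _⟩)
            refine ⟨(CProof.exL e (freshSeq_of_le (by rw [← hsplit]; exact Nat.le_add_right _ _)
              (Nat.le_add_left _ _)) q).ofEq hsplit.symm rfl, ?_⟩
            rw [CProof.isI_ofEq]
            exact ⟨hI.1, hqI⟩
          · obtain ⟨p', hh', hpI'⟩ := p0.renameI (updR id c c₀)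
            have h1 : ((B.inst (Tm.const c)) ::ₘ Γ).map (Fm.ren (updR id c c₀)) =
                (B.inst (Tm.const c₀)) ::ₘ Γ := by
              rw [Multiset.map_cons]
              congr 1
              · rw [Fm.ren_inst]
                congr 1
                · simp [Tm.ren, updR]
                · exact Fm.ren_id' fun d hd => by
                    have : d ≠ c := fun h => hBc (h ▸ hd)
                    simp [updR, this]
              · exact Multiset.ren_self_eq fun F hF d hd => by
                  have : d ≠ c := fun h => (hΓc F hF) (h ▸ hd)
                  simp [updR, this]
            have h2 : Δ.map (Fm.ren (updR id c c₀)) = Δ :=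
              Multiset.ren_self_eq fun F hF d hd => by
                have : d ≠ c := fun h => (hc.2 F hF) (h ▸ hd)
                simp [updR, this]
            exact ih (p'.ofEq h1 h2) (by rw [CProof.hgt_ofEq, hh']; omega)
              ((CProof.isI_ofEq _ _ _).2 (hpI' hI.2))
              (hg.tail.consR ⟨E, hE, hEc⟩)
      | @allR B Γ Δ c hc p0 =>
          simp only [CProof.hgt] at hp
          simp only [CProof.isI] at hI
          have hBc : ¬ B.constIn c := fun hx => hc.2 (Fm.all B) (Multiset.mem_cons_self _ _) hx
          have hΔc : ∀ F ∈ Δ, ¬ F.constIn c := fun F hF => hc.2 F (Multiset.mem_cons_of_mem hF)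
          set e := mBnd Γ₁ + mBnd ((Fm.all B) ::ₘ Δ) with he
          obtain ⟨p', hh', hpI'⟩ := p0.renameI (updR id c e)
          have h1 : Γ₂.map (Fm.ren (updR id c e)) = Γ₂ :=
            Multiset.ren_self_eq fun F hF d hd => by
              have : d ≠ c := fun h => (hc.1 F hF) (h ▸ hd)
              simp [updR, this]
          have h2 : ((B.inst (Tm.const c)) ::ₘ Δ).map (Fm.ren (updR id c e)) =
              (B.inst (Tm.const e)) ::ₘ Δ := by
            rw [Multiset.map_cons]
            congr 1
            · rw [Fm.ren_inst]
              congr 1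
              · simp [Tm.ren, updR]
              · exact Fm.ren_id' fun d hd => by
                  have : d ≠ c := fun h => hBc (h ▸ hd)
                  simp [updR, this]
            · exact Multiset.ren_self_eq fun F hF d hd => by
                have : d ≠ c := fun h => (hΔc F hF) (h ▸ hd)
                simp [updR, this]
          obtain ⟨q, hqI⟩ := ih (p'.ofEq h1 h2) (by rw [CProof.hgt_ofEq, hh']; omega)
            ((CProof.isI_ofEq _ _ _).2 (hpI' hI.2)) hg
          exact ⟨.allR e (freshSeq_of_le (Nat.le_add_right _ _) (Nat.le_add_left _ _)) q,
            hI.1, hqI⟩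

/-- SGe-monotonicity of intuitionistic provability. -/
theorem IProv.sge {Γ₂ Γ₁ : Multiset Fm} {F : Fm} (h : IProv Γ₂ F) (hg : SGe Γ₁ Γ₂) :
    IProv Γ₁ F := by
  obtain ⟨p, hp⟩ := h
  obtain ⟨q, hqI⟩ := CProof.strI p.hgt p le_rfl hp hg
  exact ⟨q, hqI⟩

/-! #### Strengthening/weakening of C-proofs, preserving the measure -/

theorem CProof.strC : ∀ (n : ℕ) {Γ₂ Δ₂ : Multiset Fm} (p : CProof Γ₂ Δ₂), p.hgt ≤ n →
    ∀ {Γ₁ Δ₁ : Multiset Fm}, SGe Γ₁ Γ₂ → Δ₂ ≤ Δ₁ →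
    ∃ q : CProof Γ₁ Δ₁, q.mu ≤ p.mu := by
  intro n
  induction n with
  | zero =>
      intro Γ₂ Δ₂ p hp
      exact absurd hp (by cases p <;> simp [CProof.hgt])
  | succ n ih =>
      intro Γ₂ Δ₂ p hp Γ₁ Δ₁ hg hd
      cases p with
      | ax ha =>
          exact ⟨.ax (AxSeq.sge ha hg hd), by simp [CProof.mu]⟩
      | @contrL B Γ Δ p0 =>
          simp only [CProof.hgt] at hp
          obtain ⟨q, hq⟩ := ih p0 (by omega) (hg.consR (hg _ (Multiset.mem_cons_self _ _))) hd
          exact ⟨q, by simpa [CProof.mu] using hq⟩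
      | @contrR B Γ Δ p0 =>
          simp only [CProof.hgt] at hp
          obtain ⟨Δ', rfl, hle'⟩ := cons_le_split hd
          obtain ⟨q, hq⟩ := ih p0 (by omega) hg
            (Multiset.cons_le_cons B (Multiset.cons_le_cons B hle'))
          exact ⟨.contrR q, by simpa [CProof.mu] using hq⟩
      | @botR D Γ Δ p0 =>
          simp only [CProof.hgt] at hp
          obtain ⟨Δ', rfl, hle'⟩ := cons_le_split hd
          obtain ⟨q, hq⟩ := ih p0 (by omega) hg (Multiset.cons_le_cons Fm.bot hle')
          exact ⟨.botR q, by simpa [CProof.mu] using hq⟩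
      | @andL B D Γ Δ p0 =>
          simp only [CProof.hgt] at hp
          obtain ⟨E, hE, hgeE⟩ := hg _ (Multiset.mem_cons_self _ _)
          obtain rfl := Fm.ge_conj_inv hgeE
          have hsplit : Γ₁ = (B.conj D) ::ₘ Γ₁.erase (B.conj D) := (Multiset.cons_erase hE).symm
          have htail : SGe ((B.conj D) ::ₘ Γ₁.erase (B.conj D)) Γ := hsplit ▸ hg.tail
          obtain ⟨q, hq⟩ := ih p0 (by omega)
            (SGe.cons (Fm.ge.refl B) (SGe.cons (Fm.ge.refl D)
              (htail.consR ⟨_, Multiset.mem_cons_self _ _, Fm.ge.refl _⟩))) hd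
          exact ⟨(CProof.andL q).ofEq hsplit.symm rfl, by simpa [CProof.mu] using hq⟩
      | @andR B D Γ Δ p₁ p₂ =>
          simp only [CProof.hgt] at hp
          obtain ⟨Δ', rfl, hle'⟩ := cons_le_split hd
          obtain ⟨q₁, hq₁⟩ := ih p₁ (show p₁.hgt ≤ n by omega) hg
            (Multiset.cons_le_cons B hle')
          obtain ⟨q₂, hq₂⟩ := ih p₂ (show p₂.hgt ≤ n by omega) hg
            (Multiset.cons_le_cons D hle')
          refine ⟨.andR q₁ q₂, ?_⟩
          simp only [CProof.mu]
          exact add_le_add hq₁ hq₂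
      | @orL B D Γ Δ p₁ p₂ =>
          simp only [CProof.hgt] at hp
          obtain ⟨E, hE, hgeE⟩ := hg _ (Multiset.mem_cons_self _ _)
          rcases Fm.ge_disj_inv hgeE with rfl | hEB | hED
          · have hsplit : Γ₁ = (B.disj D) ::ₘ Γ₁.erase (B.disj D) :=
              (Multiset.cons_erase hE).symm
            have htail : SGe ((B.disj D) ::ₘ Γ₁.erase (B.disj D)) Γ := hsplit ▸ hg.tail
            have hgB : SGe (B ::ₘ Γ₁.erase (B.disj D)) (B ::ₘ Γ) :=
              (htail.replace (Fm.ge.disjl (Fm.ge.refl B))).consR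
                ⟨B, Multiset.mem_cons_self _ _, Fm.ge.refl B⟩
            have hgD : SGe (D ::ₘ Γ₁.erase (B.disj D)) (D ::ₘ Γ) :=
              (htail.replace (Fm.ge.disjr (Fm.ge.refl D))).consR
                ⟨D, Multiset.mem_cons_self _ _, Fm.ge.refl D⟩
            obtain ⟨q₁, hq₁⟩ := ih p₁ (show p₁.hgt ≤ n by omega) hgB hd
            obtain ⟨q₂, hq₂⟩ := ih p₂ (show p₂.hgt ≤ n by omega) hgD hd
            refine ⟨(CProof.orL q₁ q₂).ofEq hsplit.symm rfl, ?_⟩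
            simp only [CProof.mu_ofEq, CProof.mu]
            refine add_le_add (add_le_add hq₁ hq₂) (ite_le_ite_of_imp ?_)
            rintro ⟨F, hF, h1, h2⟩
            exact ⟨F, Multiset.subset_of_le hd hF, h1.sge hgB, h2.sge hgD⟩
          · obtain ⟨q, hq⟩ := ih p₁ (show p₁.hgt ≤ n by omega)
              (hg.tail.consR ⟨E, hE, hEB⟩) hd
            refine ⟨q, le_trans hq ?_⟩
            simp only [CProof.mu]
            exact le_trans (Nat.le_add_right _ _) (Nat.le_add_right _ _)
          · obtain ⟨q, hq⟩ := ih p₂ (show p₂.hgt ≤ n by omega)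
              (hg.tail.consR ⟨E, hE, hED⟩) hd
            refine ⟨q, le_trans hq ?_⟩
            simp only [CProof.mu]
            exact le_trans (Nat.le_add_left _ _) (Nat.le_add_right _ _)
      | @orR1 B D Γ Δ p0 =>
          simp only [CProof.hgt] at hp
          obtain ⟨Δ', rfl, hle'⟩ := cons_le_split hd
          obtain ⟨q, hq⟩ := ih p0 (by omega) hg (Multiset.cons_le_cons B hle')
          exact ⟨.orR1 q, by simpa [CProof.mu] using hq⟩
      | @orR2 B D Γ Δ p0 =>
          simp only [CProof.hgt] at hp
          obtain ⟨Δ', rfl, hle'⟩ := cons_le_split hd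
          obtain ⟨q, hq⟩ := ih p0 (by omega) hg (Multiset.cons_le_cons D hle')
          exact ⟨.orR2 q, by simpa [CProof.mu] using hq⟩
      | @impL B D Γ Δa Θ p₁ p₂ =>
          simp only [CProof.hgt] at hp
          have hΘ : Θ ≤ Δ₁ := le_trans (self_le_add_left Θ Δa) hd
          have key : Δ₁ = (Δ₁ - Θ) + Θ := (tsub_add_cancel_of_le hΘ).symm
          have hΔa' : Δa ≤ Δ₁ - Θ := le_tsub_of_add_le_right hd
          obtain ⟨E, hE, hgeE⟩ := hg _ (Multiset.mem_cons_self _ _)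
          rcases Fm.ge_imp_inv hgeE with rfl | hED
          · have hsplit : Γ₁ = (B.imp D) ::ₘ Γ₁.erase (B.imp D) :=
              (Multiset.cons_erase hE).symm
            have htail : SGe ((B.imp D) ::ₘ Γ₁.erase (B.imp D)) Γ := hsplit ▸ hg.tail
            obtain ⟨q₁, hq₁⟩ := ih p₁ (show p₁.hgt ≤ n by omega) hg
              (Multiset.cons_le_cons B hΔa')
            obtain ⟨q₂, hq₂⟩ := ih p₂ (show p₂.hgt ≤ n by omega)
              ((htail.replace (Fm.ge.imp (Fm.ge.refl D))).consR
                ⟨D, Multiset.mem_cons_self _ _, Fm.ge.refl D⟩) le_rfl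
            refine ⟨(CProof.impL (q₁.ofEq hsplit rfl) q₂).ofEq hsplit.symm key.symm, ?_⟩
            simp only [CProof.mu_ofEq, CProof.mu]
            exact add_le_add hq₁ hq₂
          · obtain ⟨q, hq⟩ := ih p₂ (show p₂.hgt ≤ n by omega)
              (hg.tail.consR ⟨E, hE, hED⟩) hΘ
            refine ⟨q, le_trans hq ?_⟩
            simp only [CProof.mu]
            exact Nat.le_add_left _ _
      | @impR B D Γ Δ p0 =>
          simp only [CProof.hgt] at hp
          obtain ⟨Δ', rfl, hle'⟩ := cons_le_split hd
          have hgB : SGe (B ::ₘ Γ₁) (B ::ₘ Γ₂) := SGe.cons (Fm.ge.refl B) hg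
          obtain ⟨q, hq⟩ := ih p0 (by omega) hgB (Multiset.cons_le_cons D hle')
          refine ⟨.impR q, ?_⟩
          simp only [CProof.mu]
          exact add_le_add hq (ite_le_ite_of_imp fun h1 => h1.sge hgB)
      | @allL B Γ Δ t p0 =>
          simp only [CProof.hgt] at hp
          obtain ⟨E, hE, hgeE⟩ := hg _ (Multiset.mem_cons_self _ _)
          obtain rfl := Fm.ge_all_inv hgeE
          have hsplit : Γ₁ = (Fm.all B) ::ₘ Γ₁.erase (Fm.all B) := (Multiset.cons_erase hE).symm
          have htail : SGe ((Fm.all B) ::ₘ Γ₁.erase (Fm.all B)) Γ := hsplit ▸ hg.tail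
          obtain ⟨q, hq⟩ := ih p0 (by omega)
            (SGe.cons (Fm.ge.refl (B.inst t))
              (htail.consR ⟨_, Multiset.mem_cons_self _ _, Fm.ge.refl _⟩)) hd
          exact ⟨(CProof.allL t q).ofEq hsplit.symm rfl, by simpa [CProof.mu] using hq⟩
      | @exR B Γ Δ t p0 =>
          simp only [CProof.hgt] at hp
          obtain ⟨Δ', rfl, hle'⟩ := cons_le_split hd
          obtain ⟨q, hq⟩ := ih p0 (by omega) hg (Multiset.cons_le_cons (B.inst t) hle')
          exact ⟨.exR t q, by simpa [CProof.mu] using hq⟩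
      | @exL B Γ Δ c hc p0 =>
          simp only [CProof.hgt] at hp
          have hBc : ¬ B.constIn c := fun hx => hc.1 (Fm.ex B) (Multiset.mem_cons_self _ _) hx
          have hΓc : ∀ F ∈ Γ, ¬ F.constIn c := fun F hF => hc.1 F (Multiset.mem_cons_of_mem hF)
          obtain ⟨E, hE, hgeE⟩ := hg _ (Multiset.mem_cons_self _ _)
          rcases Fm.ge_ex_inv hgeE with rfl | ⟨c₀, hEc⟩
          · set e := mBnd Γ₁ + mBnd Δ₁ with he
            obtain ⟨p', hh', hpm'⟩ := p0.renameC (updR id c e)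
            have h1 : ((B.inst (Tm.const c)) ::ₘ Γ).map (Fm.ren (updR id c e)) =
                (B.inst (Tm.const e)) ::ₘ Γ := by
              rw [Multiset.map_cons]
              congr 1
              · rw [Fm.ren_inst]
                congr 1
                · simp [Tm.ren, updR]
                · exact Fm.ren_id' fun d hd' => by
                    have : d ≠ c := fun h => hBc (h ▸ hd')
                    simp [updR, this]
              · exact Multiset.ren_self_eq fun F hF d hd' => by
                  have : d ≠ c := fun h => (hΓc F hF) (h ▸ hd')
                  simp [updR, this]
            have h2 : Δ₂.map (Fm.ren (updR id c e)) = Δ₂ :=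
              Multiset.ren_self_eq fun F hF d hd' => by
                have : d ≠ c := fun h => (hc.2 F hF) (h ▸ hd')
                simp [updR, this]
            have hsplit : Γ₁ = (Fm.ex B) ::ₘ Γ₁.erase (Fm.ex B) := (Multiset.cons_erase hE).symm
            have htail : SGe ((Fm.ex B) ::ₘ Γ₁.erase (Fm.ex B)) Γ := hsplit ▸ hg.tail
            obtain ⟨q, hq⟩ := ih (p'.ofEq h1 h2)
              (by rw [CProof.hgt_ofEq, hh']; omega)
              ((htail.replace (Fm.ge.ex e (Fm.ge.refl _))).consR
                ⟨_, Multiset.mem_cons_self _ _, Fm.ge.refl _⟩) hd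
            refine ⟨(CProof.exL e (freshSeq_of_le (by rw [← hsplit]; exact Nat.le_add_right _ _)
              (Nat.le_add_left _ _)) q).ofEq hsplit.symm rfl, ?_⟩
            simp only [CProof.mu_ofEq, CProof.mu]
            exact le_trans hq (by simpa using hpm')
          · obtain ⟨p', hh', hpm'⟩ := p0.renameC (updR id c c₀)
            have h1 : ((B.inst (Tm.const c)) ::ₘ Γ).map (Fm.ren (updR id c c₀)) =
                (B.inst (Tm.const c₀)) ::ₘ Γ := by
              rw [Multiset.map_cons]
              congr 1
              · rw [Fm.ren_inst]
                congr 1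
                · simp [Tm.ren, updR]
                · exact Fm.ren_id' fun d hd' => by
                    have : d ≠ c := fun h => hBc (h ▸ hd')
                    simp [updR, this]
              · exact Multiset.ren_self_eq fun F hF d hd' => by
                  have : d ≠ c := fun h => (hΓc F hF) (h ▸ hd')
                  simp [updR, this]
            have h2 : Δ₂.map (Fm.ren (updR id c c₀)) = Δ₂ :=
              Multiset.ren_self_eq fun F hF d hd' => by
                have : d ≠ c := fun h => (hc.2 F hF) (h ▸ hd')
                simp [updR, this]
            obtain ⟨q, hq⟩ := ih (p'.ofEq h1 h2) (by rw [CProof.hgt_ofEq, hh']; omega)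
              (hg.tail.consR ⟨E, hE, hEc⟩) hd
            refine ⟨q, le_trans hq ?_⟩
            simp only [CProof.mu_ofEq, CProof.mu]
            exact hpm'
      | @allR B Γ Δ c hc p0 =>
          simp only [CProof.hgt] at hp
          have hBc : ¬ B.constIn c := fun hx => hc.2 (Fm.all B) (Multiset.mem_cons_self _ _) hx
          have hΔc : ∀ F ∈ Δ, ¬ F.constIn c := fun F hF => hc.2 F (Multiset.mem_cons_of_mem hF)
          obtain ⟨Δ', rfl, hle'⟩ := cons_le_split hd
          set e := mBnd Γ₁ + mBnd ((Fm.all B) ::ₘ Δ') with he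
          obtain ⟨p', hh', hpm'⟩ := p0.renameC (updR id c e)
          have h1 : Γ₂.map (Fm.ren (updR id c e)) = Γ₂ :=
            Multiset.ren_self_eq fun F hF d hd' => by
              have : d ≠ c := fun h => (hc.1 F hF) (h ▸ hd')
              simp [updR, this]
          have h2 : ((B.inst (Tm.const c)) ::ₘ Δ).map (Fm.ren (updR id c e)) =
              (B.inst (Tm.const e)) ::ₘ Δ := by
            rw [Multiset.map_cons]
            congr 1
            · rw [Fm.ren_inst]
              congr 1
              · simp [Tm.ren, updR]
              · exact Fm.ren_id' fun d hd' => by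
                  have : d ≠ c := fun h => hBc (h ▸ hd')
                  simp [updR, this]
            · exact Multiset.ren_self_eq fun F hF d hd' => by
                have : d ≠ c := fun h => (hΔc F hF) (h ▸ hd')
                simp [updR, this]
          obtain ⟨q, hq⟩ := ih (p'.ofEq h1 h2) (by rw [CProof.hgt_ofEq, hh']; omega) hg
            (Multiset.cons_le_cons (B.inst (Tm.const e)) hle')
          refine ⟨.allR e (freshSeq_of_le (Nat.le_add_right _ _) (Nat.le_add_left _ _)) q, ?_⟩
          simp only [CProof.mu]
          exact le_trans hq (by simpa using hpm')

/-! #### The path lemma: the antecedent at an ∨-L occurrence covers the root antecedent -/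

theorem CProof.path : ∀ {Γ Δ : Multiset Fm} (p : CProof Γ Δ) {B D : Fm} {S P : Multiset Fm},
    CProof.hasOrL _ _ p B D S P → SGe (D ::ₘ S) Γ := by
  intro Γ Δ p
  induction p with
  | ax => intro B D S P h; simp only [CProof.hasOrL] at h
  | @contrL B' Γ Δ p0 ih =>
      intro B D S P h
      simp only [CProof.hasOrL] at h
      intro F hF
      refine ih h F ?_
      rcases Multiset.mem_cons.1 hF with rfl | hF
      · exact Multiset.mem_cons_self _ _
      · exact Multiset.mem_cons_of_mem (Multiset.mem_cons_of_mem hF)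
  | @contrR B' Γ Δ p0 ih =>
      intro B D S P h; simp only [CProof.hasOrL] at h; exact ih h
  | @botR D' Γ Δ p0 ih =>
      intro B D S P h; simp only [CProof.hasOrL] at h; exact ih h
  | @andL B' D' Γ Δ p0 ih =>
      intro B D S P h
      simp only [CProof.hasOrL] at h
      intro F hF
      refine ih h F ?_
      rcases Multiset.mem_cons.1 hF with rfl | hF
      · exact Multiset.mem_cons_of_mem (Multiset.mem_cons_of_mem (Multiset.mem_cons_self _ _))
      · exact Multiset.mem_cons_of_mem (Multiset.mem_cons_of_mem (Multiset.mem_cons_of_mem hF))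
  | @andR B' D' Γ Δ p₁ p₂ ih₁ ih₂ =>
      intro B D S P h
      simp only [CProof.hasOrL] at h
      rcases h with h | h
      · exact ih₁ h
      · exact ih₂ h
  | @orL B' D' Γ Δ p₁ p₂ ih₁ ih₂ =>
      intro B D S P h
      simp only [CProof.hasOrL] at h
      rcases h with ⟨rfl, rfl, rfl, rfl⟩ | h | h
      · exact SGe.cons (Fm.ge.disjr (Fm.ge.refl _)) (SGe.refl _)
      · have h' := ih₁ h
        obtain ⟨E, hE, hgE⟩ := h' _ (Multiset.mem_cons_self B' Γ)
        exact h'.tail.consR ⟨E, hE, Fm.ge.disjl hgE⟩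
      · have h' := ih₂ h
        obtain ⟨E, hE, hgE⟩ := h' _ (Multiset.mem_cons_self D' Γ)
        exact h'.tail.consR ⟨E, hE, Fm.ge.disjr hgE⟩
  | @orR1 B' D' Γ Δ p0 ih =>
      intro B D S P h; simp only [CProof.hasOrL] at h; exact ih h
  | @orR2 B' D' Γ Δ p0 ih =>
      intro B D S P h; simp only [CProof.hasOrL] at h; exact ih h
  | @impL B' D' Γ Δ Θ p₁ p₂ ih₁ ih₂ =>
      intro B D S P h
      simp only [CProof.hasOrL] at h
      rcases h with h | h
      · exact ih₁ h
      · have h' := ih₂ h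
        obtain ⟨E, hE, hgE⟩ := h' _ (Multiset.mem_cons_self D' Γ)
        exact h'.tail.consR ⟨E, hE, Fm.ge.imp hgE⟩
  | @impR B' D' Γ Δ p0 ih =>
      intro B D S P h; simp only [CProof.hasOrL] at h; exact (ih h).tail
  | @allL B' Γ Δ t p0 ih =>
      intro B D S P h; simp only [CProof.hasOrL] at h; exact (ih h).tail
  | @exR B' Γ Δ t p0 ih =>
      intro B D S P h; simp only [CProof.hasOrL] at h; exact ih h
  | @exL B' Γ Δ c hc p0 ih =>
      intro B D S P h
      simp only [CProof.hasOrL] at h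
      have h' := ih h
      obtain ⟨E, hE, hgE⟩ := h' _ (Multiset.mem_cons_self _ _)
      exact h'.tail.consR ⟨E, hE, Fm.ge.ex c hgE⟩
  | @allR B' Γ Δ c hc p0 ih =>
      intro B D S P h; simp only [CProof.hasOrL] at h; exact ih h

/-! #### D- and G-formulas are closed under substitution -/

theorem dg_subst (F : Fm) : ∀ (k : ℕ) (u : Tm),
    (DFm F → DFm (F.subst k u)) ∧ (GFm F → GFm (F.subst k u)) := by
  induction F with
  | top => exact fun k u => ⟨fun _ => DFm.top, fun _ => GFm.top⟩
  | bot => exact fun k u => ⟨fun _ => DFm.bot, fun _ => GFm.bot⟩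
  | atom p ts => exact fun k u => ⟨fun _ => DFm.atom, fun _ => GFm.atom⟩
  | conj a b iha ihb =>
      intro k u
      constructor
      · intro h
        cases h with
        | conj ha hb => exact DFm.conj ((iha k u).1 ha) ((ihb k u).1 hb)
      · intro h
        cases h with
        | conj ha hb => exact GFm.conj ((iha k u).2 ha) ((ihb k u).2 hb)
  | disj a b iha ihb =>
      intro k u
      constructor
      · intro h
        cases h with
        | disj ha hb => exact DFm.disj ((iha k u).1 ha) ((ihb k u).1 hb)
      · intro h
        cases h with
        | disj ha hb => exact GFm.disj ((iha k u).2 ha) ((ihb k u).2 hb)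
  | imp a b iha ihb =>
      intro k u
      constructor
      · intro h
        cases h with
        | imp ha hb => exact DFm.imp ((iha k u).2 ha) ((ihb k u).1 hb)
      · intro h
        cases h with
        | imp ha hb => exact GFm.imp ((iha k u).1 ha) ((ihb k u).2 hb)
  | ex a ih =>
      intro k u
      constructor
      · intro h
        cases h with
        | ex ha => exact DFm.ex ((ih (k+1) u).1 ha)
      · intro h
        cases h with
        | ex ha => exact GFm.ex ((ih (k+1) u).2 ha)
  | all a ih =>
      intro k u
      constructor
      · intro h
        cases h with
        | all ha => exact DFm.all ((ih (k+1) u).1 ha)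
      · intro h
        exact nomatch h

theorem mall_cons {Pp : Fm → Prop} {B : Fm} {Γ : Multiset Fm} (hB : Pp B)
    (h : ∀ X ∈ Γ, Pp X) : ∀ X ∈ B ::ₘ Γ, Pp X := by
  intro X hX
  rcases Multiset.mem_cons.1 hX with rfl | hX
  · exact hB
  · exact h X hX

theorem mall_tail {Pp : Fm → Prop} {B : Fm} {Γ : Multiset Fm}
    (h : ∀ X ∈ B ::ₘ Γ, Pp X) : ∀ X ∈ Γ, Pp X :=
  fun X hX => h X (Multiset.mem_cons_of_mem hX)

/-! #### The main induction -/

theorem CProof.main : ∀ {Γ Δ : Multiset Fm} (p : CProof Γ Δ),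
    (∀ X ∈ Γ, DFm X) → (∀ X ∈ Δ, GFm X) →
    ∀ {B D : Fm} {S P : Multiset Fm}, CProof.hasOrL _ _ p B D S P →
    (¬ ∃ F ∈ P, IProv ((B.disj D) ::ₘ S) F) →
    ∃ q : CProof (D ::ₘ S) Δ, q.mu < p.mu := by
  intro Γ Δ p
  induction p with
  | ax ha =>
      intro hΓ hΔ B D S P hocc h1
      simp only [CProof.hasOrL] at hocc
  | @contrL B' Γ Δ p0 ih =>
      intro hΓ hΔ B D S P hocc h1
      simp only [CProof.hasOrL] at hocc
      obtain ⟨q, hq⟩ := ih (mall_cons (hΓ _ (Multiset.mem_cons_self _ _)) hΓ) hΔ hocc h1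
      exact ⟨q, by simpa [CProof.mu] using hq⟩
  | @contrR B' Γ Δ p0 ih =>
      intro hΓ hΔ B D S P hocc h1
      simp only [CProof.hasOrL] at hocc
      obtain ⟨q, hq⟩ := ih hΓ (mall_cons (hΔ _ (Multiset.mem_cons_self _ _)) hΔ) hocc h1
      exact ⟨.contrR q, by simpa [CProof.mu] using hq⟩
  | @botR D' Γ Δ p0 ih =>
      intro hΓ hΔ B D S P hocc h1
      simp only [CProof.hasOrL] at hocc
      obtain ⟨q, hq⟩ := ih hΓ (mall_cons GFm.bot (mall_tail hΔ)) hocc h1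
      exact ⟨.botR q, by simpa [CProof.mu] using hq⟩
  | @andL B' D' Γ Δ p0 ih =>
      intro hΓ hΔ B D S P hocc h1
      simp only [CProof.hasOrL] at hocc
      have hca : DFm B' ∧ DFm D' := by
        cases hΓ _ (Multiset.mem_cons_self _ _) with
        | conj ha hb => exact ⟨ha, hb⟩
      obtain ⟨q, hq⟩ := ih (mall_cons hca.1 (mall_cons hca.2 hΓ)) hΔ hocc h1
      exact ⟨q, by simpa [CProof.mu] using hq⟩
  | @andR B' D' Γ Δ p₁ p₂ ih₁ ih₂ =>
      intro hΓ hΔ B D S P hocc h1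
      simp only [CProof.hasOrL] at hocc
      have hgg : GFm B' ∧ GFm D' := by
        cases hΔ _ (Multiset.mem_cons_self _ _) with
        | conj ha hb => exact ⟨ha, hb⟩
      rcases hocc with hocc | hocc
      · obtain ⟨q₁, hq₁⟩ := ih₁ hΓ (mall_cons hgg.1 (mall_tail hΔ)) hocc h1
        obtain ⟨q₂, hq₂⟩ := CProof.strC p₂.hgt p₂ le_rfl (p₁.path hocc) le_rfl
        refine ⟨.andR q₁ q₂, ?_⟩
        simp only [CProof.mu]
        omega
      · obtain ⟨q₂, hq₂⟩ := ih₂ hΓ (mall_cons hgg.2 (mall_tail hΔ)) hocc h1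
        obtain ⟨q₁, hq₁⟩ := CProof.strC p₁.hgt p₁ le_rfl (p₂.path hocc) le_rfl
        refine ⟨.andR q₁ q₂, ?_⟩
        simp only [CProof.mu]
        omega
  | @orL B' D' Γ Δ p₁ p₂ ih₁ ih₂ =>
      intro hΓ hΔ B D S P hocc h1
      simp only [CProof.hasOrL] at hocc
      have hdd : DFm B' ∧ DFm D' := by
        cases hΓ _ (Multiset.mem_cons_self _ _) with
        | disj ha hb => exact ⟨ha, hb⟩
      rcases hocc with ⟨rfl, rfl, rfl, rfl⟩ | hocc | hocc
      · refine ⟨p₂, ?_⟩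
        have hnc : ¬ ∃ F ∈ Δ, IProv (B' ::ₘ Γ) F ∧ IProv (D' ::ₘ Γ) F := by
          rintro ⟨F, hF, ⟨pb, hbI⟩, ⟨pd, hdI⟩⟩
          exact h1 ⟨F, hF, CProof.orL pb pd, by
            exact ⟨by simp, hbI, hdI⟩⟩
        simp only [CProof.mu, if_neg hnc]
        omega
      · obtain ⟨q, hq⟩ := ih₁ (mall_cons hdd.1 (mall_tail hΓ)) hΔ hocc h1
        refine ⟨q, lt_of_lt_of_le hq ?_⟩
        simp only [CProof.mu]
        exact le_trans (Nat.le_add_right _ _) (Nat.le_add_right _ _)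
      · obtain ⟨q, hq⟩ := ih₂ (mall_cons hdd.2 (mall_tail hΓ)) hΔ hocc h1
        refine ⟨q, lt_of_lt_of_le hq ?_⟩
        simp only [CProof.mu]
        exact le_trans (Nat.le_add_left _ _) (Nat.le_add_right _ _)
  | @orR1 B' D' Γ Δ p0 ih =>
      intro hΓ hΔ B D S P hocc h1
      simp only [CProof.hasOrL] at hocc
      have hgg : GFm B' ∧ GFm D' := by
        cases hΔ _ (Multiset.mem_cons_self _ _) with
        | disj ha hb => exact ⟨ha, hb⟩
      obtain ⟨q, hq⟩ := ih hΓ (mall_cons hgg.1 (mall_tail hΔ)) hocc h1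
      exact ⟨.orR1 q, by simpa [CProof.mu] using hq⟩
  | @orR2 B' D' Γ Δ p0 ih =>
      intro hΓ hΔ B D S P hocc h1
      simp only [CProof.hasOrL] at hocc
      have hgg : GFm B' ∧ GFm D' := by
        cases hΔ _ (Multiset.mem_cons_self _ _) with
        | disj ha hb => exact ⟨ha, hb⟩
      obtain ⟨q, hq⟩ := ih hΓ (mall_cons hgg.2 (mall_tail hΔ)) hocc h1
      exact ⟨.orR2 q, by simpa [CProof.mu] using hq⟩
  | @impL B' D' Γ Δ Θ p₁ p₂ ih₁ ih₂ =>
      intro hΓ hΔ B D S P hocc h1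
      simp only [CProof.hasOrL] at hocc
      have hgd : GFm B' ∧ DFm D' := by
        cases hΓ _ (Multiset.mem_cons_self _ _) with
        | imp ha hb => exact ⟨ha, hb⟩
      rcases hocc with hocc | hocc
      · obtain ⟨q₁, hq₁⟩ := ih₁ hΓ
          (mall_cons hgd.1 (fun X hX => hΔ X (Multiset.mem_add.2 (Or.inl hX)))) hocc h1
        have sge0 : SGe (D ::ₘ S) ((B'.imp D') ::ₘ Γ) := p₁.path hocc
        obtain ⟨E, hE, hgeE⟩ := sge0 _ (Multiset.mem_cons_self _ _)
        obtain ⟨q₁', hq₁'⟩ := CProof.strC q₁.hgt q₁ le_rfl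
          (SGe.consL (SGe.refl (D ::ₘ S)) : SGe ((B'.imp D') ::ₘ D ::ₘ S) (D ::ₘ S)) le_rfl
        obtain ⟨q₂', hq₂'⟩ := CProof.strC p₂.hgt p₂ le_rfl
          (SGe.cons (Fm.ge.refl D') sge0.tail) le_rfl
        obtain ⟨q, hq⟩ := CProof.strC (CProof.impL q₁' q₂').hgt (CProof.impL q₁' q₂') le_rfl
          ((SGe.refl (D ::ₘ S)).consR ⟨E, hE, hgeE⟩) le_rfl
        refine ⟨q, ?_⟩
        simp only [CProof.mu] at hq ⊢
        omega
      · obtain ⟨q₂, hq₂⟩ := ih₂ (mall_cons hgd.2 (mall_tail hΓ))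
          (fun X hX => hΔ X (Multiset.mem_add.2 (Or.inr hX))) hocc h1
        obtain ⟨q, hq⟩ := CProof.strC q₂.hgt q₂ le_rfl (SGe.refl _) (self_le_add_left Θ Δ)
        refine ⟨q, ?_⟩
        simp only [CProof.mu]
        omega
  | @impR B' D' Γ Δ p0 ih =>
      intro hΓ hΔ B D S P hocc h1
      simp only [CProof.hasOrL] at hocc
      have hdg : DFm B' ∧ GFm D' := by
        cases hΔ _ (Multiset.mem_cons_self _ _) with
        | imp ha hb => exact ⟨ha, hb⟩
      obtain ⟨q0, hq0⟩ := ih (mall_cons hdg.1 hΓ) (mall_cons hdg.2 (mall_tail hΔ)) hocc h1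
      obtain ⟨q1, hq1⟩ := CProof.strC q0.hgt q0 le_rfl
        (SGe.consL (SGe.refl (D ::ₘ S)) : SGe (B' ::ₘ D ::ₘ S) (D ::ₘ S)) le_rfl
      refine ⟨.impR q1, ?_⟩
      have hsge : SGe (B' ::ₘ D ::ₘ S) (B' ::ₘ Γ) :=
        SGe.cons (Fm.ge.refl B') (p0.path hocc).tail
      simp only [CProof.mu]
      by_cases hI : IProv (B' ::ₘ Γ) D'
      · rw [if_pos hI, if_pos (hI.sge hsge)]
        omega
      · rw [if_neg hI]
        by_cases hI2 : IProv (B' ::ₘ D ::ₘ S) D'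
        · rw [if_pos hI2]; omega
        · rw [if_neg hI2]; omega
  | @allL B' Γ Δ t p0 ih =>
      intro hΓ hΔ B D S P hocc h1
      simp only [CProof.hasOrL] at hocc
      have hda : DFm B' := by
        cases hΓ _ (Multiset.mem_cons_self _ _) with
        | all ha => exact ha
      obtain ⟨q, hq⟩ := ih (mall_cons ((dg_subst B' 0 t).1 hda) hΓ) hΔ hocc h1
      exact ⟨q, by simpa [CProof.mu] using hq⟩
  | @exR B' Γ Δ t p0 ih =>
      intro hΓ hΔ B D S P hocc h1
      simp only [CProof.hasOrL] at hocc
      have hga : GFm B' := by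
        cases hΔ _ (Multiset.mem_cons_self _ _) with
        | ex ha => exact ha
      obtain ⟨q, hq⟩ := ih hΓ (mall_cons ((dg_subst B' 0 t).2 hga) (mall_tail hΔ)) hocc h1
      exact ⟨.exR t q, by simpa [CProof.mu] using hq⟩
  | @exL B' Γ Δ c hc p0 ih =>
      intro hΓ hΔ B D S P hocc h1
      simp only [CProof.hasOrL] at hocc
      have hda : DFm B' := by
        cases hΓ _ (Multiset.mem_cons_self _ _) with
        | ex ha => exact ha
      obtain ⟨q, hq⟩ := ih (mall_cons ((dg_subst B' 0 (Tm.const c)).1 hda) (mall_tail hΓ))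
        hΔ hocc h1
      exact ⟨q, by simpa [CProof.mu] using hq⟩
  | @allR B' Γ Δ c hc p0 ih =>
      intro hΓ hΔ B D S P hocc h1
      exact absurd (hΔ _ (Multiset.mem_cons_self _ _)) (fun h => nomatch h)

end Orl

/-- Lemma `orl`: let `Γ` and `Δ` be multisets of D- and
G-formulas respectively, and let `Γ → Δ` have a C-proof `Ξ` containing an
∨-L rule with upper sequents `B,Σ → Π` and `D,Σ → Π` (lower sequent
`B∨D,Σ → Π`) such that no `F ∈ Π` gives an I-proof of `B∨D,Σ → F`, but some
`F ∈ Π` gives an I-proof of `D,Σ → F`. Then `D,Σ → Δ` has a C-proof of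
nonconstructiveness measure smaller than `μ(Ξ)`. -/
theorem statement_6 (Γ Δ : Multiset Fm) (hΓ : ∀ X ∈ Γ, DFm X) (hΔ : ∀ X ∈ Δ, GFm X)
    (p : CProof Γ Δ) (B D : Fm) (S P : Multiset Fm)
    (hocc : CProof.hasOrL _ _ p B D S P)
    (h1 : ¬ ∃ F ∈ P, IProv ((B.disj D) ::ₘ S) F)
    (h2 : ∃ F ∈ P, IProv (D ::ₘ S) F) :
    ∃ q : CProof (D ::ₘ S) Δ, q.mu < p.mu :=
  CProof.main p hΓ hΔ hocc h1
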